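/- arXiv:1705.10476 — 4 statements merged into one kernel-verified Lean document; each statement's English description precedes it below -/
import Mathlib

section
/- If G is a finite non-nilpotent group and every maximal chain of G of length 2 contains a proper subgroup of G that is subnormal in G, then G is a Schmidt group all of whose Sylow subgroups are abelian. (Corollary 1.5) -/
/-- `A` is subnormal in `G`: there is a chain `A = A₀ ⊴ A₁ ⊴ ⋯ ⊴ Aₙ = G`
with each term normal in the next. -/
def SubnormalIn {G : Type*} [Group G] (A : Subgroup G) : Prop :=
  ∃ (n : ℕ) (c : ℕ → Subgroup G), c 0 = A ∧ c n = ⊤ ∧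
    ∀ i < n, c i ≤ c (i + 1) ∧ ((c i).subgroupOf (c (i + 1))).Normal

/-- A Schmidt group: a non-nilpotent group all of whose proper subgroups are nilpotent. -/
def IsSchmidtGroup (G : Type*) [Group G] : Prop :=
  ¬ Group.IsNilpotent G ∧ ∀ H : Subgroup G, H < ⊤ → Group.IsNilpotent H

/-- `T` is a maximal subgroup of the subgroup `M` (of some ambient group). -/
def IsMaximalSubgroupOf {G : Type*} [Group G] (T M : Subgroup G) : Prop :=
  T < M ∧ ∀ L : Subgroup G, T < L → L ≤ M → L = M

/-- All Sylow subgroups of `G` are abelian. -/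
def AllSylowAbelian (G : Type*) [Group G] : Prop :=
  ∀ p : ℕ, p.Prime → ∀ P : Sylow p G, ∀ x y : (P : Subgroup G), x * y = y * x

section Helpers
variable {G : Type*} [Group G]

lemma normal_of_subgroupOf_top {M : Subgroup G} (h : (M.subgroupOf ⊤).Normal) : M.Normal := by
  constructor
  intro n hn g
  exact (Subgroup.normal_subgroupOf_iff le_top).mp h n g hn trivial

lemma chain_le {n : ℕ} {c : ℕ → Subgroup G} (hstep : ∀ i < n, c i ≤ c (i + 1)) :
    ∀ i ≤ n, c 0 ≤ c i := by
  intro i hi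
  induction i with
  | zero => exact le_rfl
  | succ k ih => exact (ih (by omega)).trans (hstep k (by omega))

lemma SubnormalIn.normal_of_isCoatom {M : Subgroup G} (hsn : SubnormalIn M)
    (hM : IsCoatom M) : M.Normal := by
  obtain ⟨n, c, hc0, hcn, hstep⟩ := hsn
  induction n generalizing c with
  | zero => exact absurd (hc0 ▸ hcn) hM.1
  | succ n ih =>
    have hMn : M ≤ c n := hc0 ▸ chain_le (fun i hi => (hstep i (by omega)).1) n le_rfl
    rcases hMn.lt_or_eq with hlt | heq
    · have hcnt : c n = ⊤ := hM.2 _ hlt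
      exact ih c hc0 hcnt (fun i hi => hstep i (by omega))
    · have := (hstep n (by omega)).2
      rw [← heq, hcn] at this
      exact normal_of_subgroupOf_top this
end Helpers

section Helpers2
variable {G : Type*} [Group G]

lemma SubnormalIn.restrict {A H : Subgroup G} (hsn : SubnormalIn A) (hAH : A ≤ H) :
    SubnormalIn (A.subgroupOf H) := by
  obtain ⟨n, c, hc0, hcn, hstep⟩ := hsn
  refine ⟨n, fun i => (c i ⊓ H).subgroupOf H, ?_, ?_, ?_⟩
  · show (c 0 ⊓ H).subgroupOf H = A.subgroupOf H
    rw [hc0, inf_of_le_left hAH]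
  · show (c n ⊓ H).subgroupOf H = ⊤
    rw [hcn, top_inf_eq, Subgroup.subgroupOf_self]
  · intro i hi
    have hle : (c i ⊓ H).subgroupOf H ≤ (c (i+1) ⊓ H).subgroupOf H :=
      Subgroup.comap_mono (inf_le_inf_right H (hstep i hi).1)
    refine ⟨hle, ?_⟩
    rw [Subgroup.normal_subgroupOf_iff hle]
    intro x y hx hy
    rw [Subgroup.mem_subgroupOf] at hx hy ⊢
    have hconj := (Subgroup.normal_subgroupOf_iff (hstep i hi).1).mp (hstep i hi).2
      (x : G) (y : G) (hx.1 : (x:G) ∈ c i) (hy.1)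
    exact ⟨hconj, H.mul_mem (H.mul_mem hy.2 hx.2) (H.inv_mem hy.2)⟩

lemma normal_of_subnormal_special {T M : Subgroup G} (hsn : SubnormalIn T) (hM : IsCoatom M)
    (hMn : ¬ M.Normal) (hTM : IsMaximalSubgroupOf T M) (hnorm : M ≤ Subgroup.normalizer (T : Set G)) :
    T.Normal := by
  obtain ⟨n, c, hc0, hcn, hstep⟩ := hsn
  induction n generalizing c with
  | zero =>
    exfalso
    exact not_top_lt ((hc0 ▸ hcn : T = ⊤) ▸ hTM.1)
  | succ n ih =>
    by_cases hNT : Subgroup.normalizer (T : Set G) = ⊤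
    · exact Subgroup.normalizer_eq_top_iff.mp hNT
    have hNM : Subgroup.normalizer (T : Set G) = M := by
      rcases hnorm.lt_or_eq with hlt | heq
      · exact absurd (hM.2 _ hlt) hNT
      · exact heq.symm
    have h01 := hstep 0 (by omega)
    have hT1 : T ≤ c 1 := hc0 ▸ h01.1
    have hc1 : c 1 ≤ Subgroup.normalizer (T : Set G) := by
      intro y hy
      rw [Subgroup.mem_normalizer_iff]
      intro h
      constructor
      · intro hh
        exact (Subgroup.normal_subgroupOf_iff (hc0 ▸ h01.1)).mp (hc0 ▸ h01.2) h y hh hy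
      · intro hh
        have := (Subgroup.normal_subgroupOf_iff (hc0 ▸ h01.1)).mp (hc0 ▸ h01.2)
          (y * h * y⁻¹) y⁻¹ hh ((c 1).inv_mem hy)
        simpa [mul_assoc] using this
    rcases hT1.lt_or_eq with hlt | heq
    · -- c 1 = M, so tail chain shows M subnormal: contradiction
      have hc1M : c 1 = M := hTM.2 _ hlt (hc1.trans_eq hNM)
      exact absurd (SubnormalIn.normal_of_isCoatom
        ⟨n, fun i => c (i+1), hc1M, hcn, fun i hi => hstep (i+1) (by omega)⟩ hM) hMn
    · refine ih (fun i => c (i+1)) ?_ hcn (fun i hi => hstep (i+1) (by omega))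
      show c 1 = T
      rw [← heq]

end Helpers2

section Helpers3
variable {G : Type*} [Group G]

lemma map_subtype_subgroupOf {M : Subgroup G} (T' : Subgroup ↥M) :
    (T'.map M.subtype).subgroupOf M = T' := by
  apply Subgroup.comap_map_eq_self_of_injective M.subtype_injective

lemma map_subtype_top (M : Subgroup G) : (⊤ : Subgroup ↥M).map M.subtype = M := by
  rw [← MonoidHom.range_eq_map, Subgroup.range_subtype]

lemma isMaximal_of_isCoatom {M : Subgroup G} {T' : Subgroup ↥M} (h : IsCoatom T') :
    IsMaximalSubgroupOf (T'.map M.subtype) M := by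
  constructor
  · refine lt_of_le_of_ne (Subgroup.map_subtype_le T') (fun heq => h.1 ?_)
    apply Subgroup.map_injective M.subtype_injective
    rw [heq, map_subtype_top]
  · intro L hlt hle
    have h1 : T' < L.subgroupOf M := by
      refine lt_of_le_of_ne ?_ (fun heq => hlt.ne ?_)
      · rw [← map_subtype_subgroupOf T']
        exact Subgroup.comap_mono hlt.le
    -- L.subgroupOf M mapped back is L ⊓ M = L
      · have : (L.subgroupOf M).map M.subtype = L := by
          rw [Subgroup.subgroupOf_map_subtype, inf_of_le_left hle]
        rw [heq, this]
    have := h.2 _ h1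
    have h2 : L ⊓ M = M := by
      rw [← Subgroup.subgroupOf_map_subtype, this, map_subtype_top]
    rw [inf_of_le_left hle] at h2
    exact h2

lemma isCoatom_of_isMaximal {M T : Subgroup G} (h : IsMaximalSubgroupOf T M) :
    IsCoatom (T.subgroupOf M) := by
  have hTM : T ≤ M := h.1.le
  constructor
  · intro heq
    have : T ⊓ M = M := by rw [← Subgroup.subgroupOf_map_subtype, heq, map_subtype_top]
    rw [inf_of_le_left hTM] at this
    exact h.1.ne this
  · intro X hX
    have h1 : T < X.map M.subtype := by
      refine lt_of_le_of_ne ?_ (fun heq => hX.ne ?_)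
      · calc T = (T.subgroupOf M).map M.subtype := by
                rw [Subgroup.subgroupOf_map_subtype, inf_of_le_left hTM]
             _ ≤ X.map M.subtype := Subgroup.map_mono hX.le
      · rw [heq, map_subtype_subgroupOf]
    have h2 := h.2 _ h1 (Subgroup.map_subtype_le X)
    apply Subgroup.map_injective M.subtype_injective
    rw [h2, map_subtype_top]

lemma exists_coatom_ge [Finite G] {H : Subgroup G} (hH : H ≠ ⊤) :
    ∃ M : Subgroup G, IsCoatom M ∧ H ≤ M := by
  have : IsCoatomic (Subgroup G) :=
    isCoatomic_of_orderTop_gt_wellFounded (Finite.to_wellFoundedGT).wf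
  rcases (this.eq_top_or_exists_le_coatom H) with h | h
  · exact absurd h hH
  · exact h

lemma nilpotent_of_trivial_subgroups (h : ∀ H : Subgroup G, H = ⊥ ∨ H = ⊤) :
    Group.IsNilpotent G := by
  rcases subsingleton_or_nontrivial G with hs | hn
  · infer_instance
  · obtain ⟨x, hx⟩ := exists_ne (1 : G)
    have hz : Subgroup.zpowers x = ⊤ := by
      rcases h (Subgroup.zpowers x) with h1 | h1
      · exact absurd (Subgroup.zpowers_eq_bot.mp h1) hx
      · exact h1
    have : IsCyclic G := ⟨x, fun y => by
      have : y ∈ Subgroup.zpowers x := hz ▸ Subgroup.mem_top y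
      exact this⟩
    let _ := this.commGroup
    infer_instance

lemma card_prime_of_trivial_subgroups [Finite G] [Nontrivial G]
    (h : ∀ H : Subgroup G, H = ⊥ ∨ H = ⊤) : (Nat.card G).Prime := by
  have h1 : 1 < Nat.card G := Finite.one_lt_card
  have hp : (Nat.card G).minFac.Prime := Nat.minFac_prime (by omega)
  haveI : Fact (Nat.card G).minFac.Prime := ⟨hp⟩
  obtain ⟨g, hg⟩ := exists_prime_orderOf_dvd_card' (G := G) (Nat.card G).minFac
    (Nat.minFac_dvd _)
  have hg1 : g ≠ 1 := by
    intro h0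
    rw [h0, orderOf_one] at hg
    exact hp.one_lt.ne hg
  have hz : Subgroup.zpowers g = ⊤ := by
    rcases h (Subgroup.zpowers g) with h1 | h1
    · exact absurd (Subgroup.zpowers_eq_bot.mp h1) hg1
    · exact h1
  have heq : Nat.card G = orderOf g := by
    rw [← Nat.card_zpowers, hz]
    exact (Nat.card_congr Subgroup.topEquiv.toEquiv).symm
  rw [heq, hg]
  exact hp

end Helpers3

section Helpers4
variable {G : Type*} [Group G]

lemma map_symm_map {H : Type*} [Group H] (e : G ≃* H) (K : Subgroup G) :
    (K.map e.toMonoidHom).map e.symm.toMonoidHom = K := by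
  ext x
  constructor
  · rintro ⟨y, ⟨z, hz, rfl⟩, rfl⟩
    simpa using hz
  · intro hx
    exact ⟨e x, ⟨x, hx, rfl⟩, by simp⟩

lemma map_equiv_top {H : Type*} [Group H] (e : G ≃* H) :
    (⊤ : Subgroup G).map e.toMonoidHom = ⊤ := by
  ext x
  simp only [Subgroup.mem_map, Subgroup.mem_top, true_and, iff_true]
  exact ⟨e.symm x, by simp⟩

lemma isCoatom_map {H : Type*} [Group H] (e : G ≃* H) {M : Subgroup G} (h : IsCoatom M) :
    IsCoatom (M.map e.toMonoidHom) := by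
  constructor
  · intro htop
    apply h.1
    rw [← map_symm_map e M, htop]
    exact map_equiv_top e.symm
  · intro b hb
    have h1 : M < b.map e.symm.toMonoidHom := by
      refine lt_of_le_of_ne ?_ (fun heq => hb.ne ?_)
      · rw [← map_symm_map e M]
        exact Subgroup.map_mono hb.le
      · have := congrArg (Subgroup.map e.toMonoidHom) heq
        rw [show (b.map e.symm.toMonoidHom).map e.toMonoidHom = b from by
          have := map_symm_map e.symm b
          rwa [MulEquiv.symm_symm] at this] at this
        exact this
    have h2 := h.2 _ h1
    have h3 := congrArg (Subgroup.map e.toMonoidHom) h2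
    rw [show (b.map e.symm.toMonoidHom).map e.toMonoidHom = b from by
      have := map_symm_map e.symm b
      rwa [MulEquiv.symm_symm] at this, map_equiv_top] at h3
    exact h3

lemma index_card_prime_of_normal_coatom [Finite G] {C : Subgroup G} (hC : IsCoatom C)
    (hN : C.Normal) : (Nat.card (G ⧸ C)).Prime := by
  haveI := hN
  have hnontriv : Nontrivial (G ⧸ C) := by
    rw [← Finite.one_lt_card_iff_nontrivial]
    have h0 : C.index ≠ 0 := Subgroup.index_ne_zero_of_finite
    have h1 : C.index ≠ 1 := fun h => hC.1 (Subgroup.index_eq_one.mp h)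
    have : Nat.card (G ⧸ C) = C.index := rfl
    omega
  apply card_prime_of_trivial_subgroups
  intro H
  have hker : C ≤ H.comap (QuotientGroup.mk' C) := by
    intro x hx
    have : (QuotientGroup.mk' C) x = 1 := by
      rw [← MonoidHom.mem_ker, QuotientGroup.ker_mk']
      exact hx
    rw [Subgroup.mem_comap, this]
    exact H.one_mem
  rcases hker.lt_or_eq with hlt | heq
  · right
    have htop := hC.2 _ hlt
    have := congrArg (Subgroup.map (QuotientGroup.mk' C)) htop
    rwa [Subgroup.map_comap_eq_self_of_surjective (QuotientGroup.mk'_surjective C),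
      Subgroup.map_top_of_surjective _ (QuotientGroup.mk'_surjective C)] at this
  · left
    have hH : H = Subgroup.map (QuotientGroup.mk' C) C := by
      conv_lhs => rw [← Subgroup.map_comap_eq_self_of_surjective
        (QuotientGroup.mk'_surjective C) H]
      rw [← heq]
    rw [hH, eq_bot_iff]
    rintro x ⟨y, hy, rfl⟩
    rw [Subgroup.mem_bot, ← MonoidHom.mem_ker, QuotientGroup.ker_mk']
    exact hy

lemma card_sup_mul_card_inf [Finite G] (H N : Subgroup G) (hN : N.Normal) :
    Nat.card ↥(H ⊔ N) * Nat.card ↥(H ⊓ N) = Nat.card ↥H * Nat.card ↥N := by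
  haveI := hN
  have e := QuotientGroup.quotientInfEquivProdNormalQuotient H N
  have h1 : Nat.card ↥H = Nat.card (↥H ⧸ N.subgroupOf H) * Nat.card ↥(N.subgroupOf H) :=
    Subgroup.card_eq_card_quotient_mul_card_subgroup _
  have h2 : Nat.card ↥(H ⊔ N) =
      Nat.card (↥(H ⊔ N) ⧸ N.subgroupOf (H ⊔ N)) * Nat.card ↥(N.subgroupOf (H ⊔ N)) :=
    Subgroup.card_eq_card_quotient_mul_card_subgroup _
  have h3 : Nat.card ↥(N.subgroupOf H) = Nat.card ↥(H ⊓ N) := by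
    rw [inf_comm]
    have := (N.subgroupOf H).equivMapOfInjective H.subtype H.subtype_injective
    rw [Subgroup.subgroupOf_map_subtype] at this
    exact Nat.card_congr this.toEquiv
  have h4 : Nat.card ↥(N.subgroupOf (H ⊔ N)) = Nat.card ↥N := by
    have := (N.subgroupOf (H ⊔ N)).equivMapOfInjective (H ⊔ N).subtype (H ⊔ N).subtype_injective
    rw [Subgroup.subgroupOf_map_subtype, inf_of_le_left le_sup_right] at this
    exact Nat.card_congr this.toEquiv
  have h5 : Nat.card (↥H ⧸ N.subgroupOf H) =
      Nat.card (↥(H ⊔ N) ⧸ N.subgroupOf (H ⊔ N)) := Nat.card_congr e.toEquiv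
  rw [h1, h2, h3, h4, h5]
  ring

lemma sylow_all_normal_of_exists_normal {X : Type*} [Group X] [Finite X] {p : ℕ} [Fact p.Prime]
    {S : Subgroup X} (hS : S.Normal) (hcard : Nat.card S = p ^ (Nat.card X).factorization p) :
    ∀ R : Sylow p X, (R : Subgroup X).Normal := by
  intro R
  let Ps := Sylow.ofCard S hcard
  haveI hPs : (Ps : Subgroup X).Normal := by rw [Sylow.coe_ofCard]; exact hS
  obtain ⟨x, hx⟩ := MulAction.exists_smul_eq X Ps R
  rw [Sylow.smul_eq_of_normal] at hx
  rw [← hx]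
  exact hPs

lemma eq_bot_of_commutator_eq_self [Finite G] {H : Subgroup G} (hsolv : IsSolvable ↥H)
    (h : ⁅H, H⁆ = H) : H = ⊥ := by
  have hmap : Subgroup.map H.subtype ⁅(⊤ : Subgroup ↥H), (⊤ : Subgroup ↥H)⁆ = ⁅H, H⁆ := by
    rw [Subgroup.map_commutator, map_subtype_top]
  have htop : ⁅(⊤ : Subgroup ↥H), (⊤ : Subgroup ↥H)⁆ = ⊤ := by
    apply Subgroup.map_injective H.subtype_injective
    rw [hmap, h, map_subtype_top]
  obtain ⟨n, hn⟩ := hsolv.solvable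
  have hall : ∀ m, derivedSeries ↥H m = ⊤ := by
    intro m
    induction m with
    | zero => rfl
    | succ k ih => rw [derivedSeries_succ, ih, htop]
  rw [hall n] at hn
  rw [Subgroup.eq_bot_iff_forall]
  intro x hx
  have : (⟨x, hx⟩ : ↥H) ∈ (⊥ : Subgroup ↥H) := hn ▸ Subgroup.mem_top _
  rw [Subgroup.mem_bot] at this
  exact congrArg Subtype.val this

end Helpers4

section Structure1
variable {G : Type*} [Group G]

lemma le_normalizer_of_conj {T M : Subgroup G} (hTM : T ≤ M)
    (hc : ∀ h k, h ∈ T → k ∈ M → k * h * k⁻¹ ∈ T) : M ≤ Subgroup.normalizer (T : Set G) := by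
  intro m hm
  rw [Subgroup.mem_normalizer_iff]
  intro h
  constructor
  · intro hh
    exact hc h m hh hm
  · intro hh
    have := hc (m * h * m⁻¹) m⁻¹ hh (M.inv_mem hm)
    simpa [mul_assoc] using this

lemma nonnormal_coatom_nilpotent [Finite G] {M : Subgroup G} (hM : IsCoatom M)
    (hMn : ¬ M.Normal)
    (hsub : ∀ T : Subgroup G, IsMaximalSubgroupOf T M → SubnormalIn T) :
    Group.IsNilpotent ↥M := by
  have hcoatoms : ∀ T' : Subgroup ↥M, IsCoatom T' → T'.Normal := by
    intro T' hT'
    have hmax := isMaximal_of_isCoatom hT'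
    have hsn := hsub _ hmax
    have hres := hsn.restrict hmax.1.le
    rw [map_subtype_subgroupOf] at hres
    exact hres.normal_of_isCoatom hT'
  exact ((isNilpotent_of_finite_tfae (G := ↥M)).out 2 0).mp hcoatoms

end Structure1

section Structure2
variable {G : Type*} [Group G]

/-- Full structure of a non-normal coatom under the subnormality hypothesis. -/
lemma nonnormal_coatom_structure [Finite G] {M : Subgroup G} (hM : IsCoatom M)
    (hMn : ¬ M.Normal)
    (hsub : ∀ T : Subgroup G, IsMaximalSubgroupOf T M → SubnormalIn T) :
    ∃ (T : Subgroup G) (q k : ℕ), q.Prime ∧ k ≠ 0 ∧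
      IsMaximalSubgroupOf T M ∧ T.Normal ∧
      (∀ H : Subgroup G, H ≤ M → H ≠ M → H ≤ T) ∧
      Nat.card ↥M = q ^ k ∧ Nat.card ↥T = q ^ (k - 1) ∧ IsPGroup q ↥M ∧
      (∀ a b : G, a ∈ M → b ∈ M → a * b = b * a) := by
  have hnil := nonnormal_coatom_nilpotent hM hMn hsub
  -- every maximal subgroup of M is normal in G
  have hTnormG : ∀ T : Subgroup G, IsMaximalSubgroupOf T M → T.Normal := by
    intro T hmax
    have hT' : IsCoatom (T.subgroupOf M) := isCoatom_of_isMaximal hmax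
    have himp := (isNilpotent_of_finite_tfae (G := ↥M)).out 0 2
    have hT'n : (T.subgroupOf M).Normal := himp.mp hnil _ hT'
    have hnorm : M ≤ Subgroup.normalizer (T : Set G) :=
      le_normalizer_of_conj hmax.1.le
        ((Subgroup.normal_subgroupOf_iff hmax.1.le).mp hT'n)
    exact normal_of_subnormal_special (hsub T hmax) hM hMn hmax hnorm
  -- M is not ⊥
  have hMbot : M ≠ ⊥ := fun h => hMn (h ▸ ⟨fun n hn g => by simpa [Subgroup.mem_bot] using hn⟩)
  -- existence of a maximal subgroup of M
  have hbotne : (⊥ : Subgroup ↥M) ≠ ⊤ := by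
    intro h
    apply hMbot
    rw [Subgroup.eq_bot_iff_forall]
    intro x hx
    have : (⟨x, hx⟩ : ↥M) ∈ (⊥ : Subgroup ↥M) := h ▸ Subgroup.mem_top _
    rw [Subgroup.mem_bot] at this
    exact congrArg Subtype.val this
  obtain ⟨T', hT'coatom, -⟩ := exists_coatom_ge (G := ↥M) hbotne
  set T : Subgroup G := T'.map M.subtype with hTdef
  have hmaxT : IsMaximalSubgroupOf T M := isMaximal_of_isCoatom hT'coatom
  -- every proper subgroup of M is contained in T (via uniqueness of the coatom)
  have hunique : ∀ S' : Subgroup ↥M, IsCoatom S' → S' = T' := by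
    intro S' hS'
    by_contra hne
    have hSnorm := hTnormG _ (isMaximal_of_isCoatom hS')
    have hTnorm := hTnormG _ hmaxT
    have hsupM : (S'.map M.subtype) ⊔ T = M := by
      apply hmaxT.2
      · refine lt_of_le_of_ne le_sup_right (fun heq => hne ?_)
        have hle : S'.map M.subtype ≤ T := heq ▸ le_sup_left
        have hle' : S' ≤ T' := by
          rw [← map_subtype_subgroupOf S', ← map_subtype_subgroupOf T']
          exact Subgroup.comap_mono hle
        rcases hle'.lt_or_eq with hlt | heq'
        · exact absurd (hS'.2 _ hlt) hT'coatom.1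
        · exact heq'
      · exact sup_le (Subgroup.map_subtype_le S') hmaxT.1.le
    haveI := hSnorm
    haveI := hTnorm
    exact hMn (hsupM ▸ Subgroup.sup_normal _ _)
  have hproper : ∀ H : Subgroup G, H ≤ M → H ≠ M → H ≤ T := by
    intro H hHM hHne
    have hne : H.subgroupOf M ≠ ⊤ := by
      intro h
      apply hHne
      have : (H.subgroupOf M).map M.subtype = M := by rw [h, map_subtype_top]
      rw [Subgroup.subgroupOf_map_subtype, inf_of_le_left hHM] at this
      exact this
    obtain ⟨S', hS', hHS'⟩ := exists_coatom_ge (G := ↥M) hne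
    rw [hunique S' hS'] at hHS'
    calc H = (H.subgroupOf M).map M.subtype := by
            rw [Subgroup.subgroupOf_map_subtype, inf_of_le_left hHM]
      _ ≤ T := Subgroup.map_mono hHS'
  -- M is cyclic generated by any element outside T
  obtain ⟨x, hxM, hxT⟩ := SetLike.exists_of_lt hmaxT.1
  have hzp : Subgroup.zpowers x = M := by
    by_contra hne
    exact hxT (hproper _ ((Subgroup.zpowers_le).mpr hxM) hne (Subgroup.mem_zpowers x))
  have hcardM : Nat.card ↥M = orderOf x := by rw [← hzp, Nat.card_zpowers]
  have hn0 : orderOf x ≠ 0 := by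
    have : (0:ℕ) < orderOf x := orderOf_pos x
    omega
  have hx1 : x ≠ 1 := fun h => hxT (h ▸ T.one_mem)
  have hn1 : orderOf x ≠ 1 := fun h => hx1 (orderOf_eq_one_iff.mp h)
  set n := orderOf x with hndef
  set q := n.minFac with hqdef
  have hq : q.Prime := Nat.minFac_prime hn1
  -- powers with exponent a prime divisor land in T
  have hpowT : ∀ r : ℕ, r.Prime → r ∣ n → x ^ r ∈ T := by
    intro r hr hrn
    have hord : orderOf (x ^ r) = n / r := by
      rw [orderOf_pow, Nat.gcd_comm, Nat.gcd_eq_left hrn]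
    have hlt : n / r < n := Nat.div_lt_self (by omega) hr.one_lt
    have hne : Subgroup.zpowers (x ^ r) ≠ M := by
      intro h
      rw [← h, Nat.card_zpowers, hord] at hcardM
      omega
    exact hproper _ ((Subgroup.zpowers_le).mpr (M.pow_mem hxM r)) hne
      (Subgroup.mem_zpowers _)
  have hqonly : ∀ r : ℕ, r.Prime → r ∣ n → r = q := by
    intro r hr hrn
    by_contra hne
    have hco : Nat.Coprime q r := (Nat.coprime_primes hq hr).mpr (fun h => hne h.symm)
    have hcoZ : IsCoprime (q : ℤ) (r : ℤ) := by
      rw [Int.isCoprime_iff_gcd_eq_one]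
      exact_mod_cast hco
    obtain ⟨a, b, hab⟩ := hcoZ
    have hxq : x ^ (q:ℤ) ∈ T := by exact_mod_cast hpowT q hq (Nat.minFac_dvd n)
    have hxr : x ^ (r:ℤ) ∈ T := by exact_mod_cast hpowT r hr hrn
    apply hxT
    have hxeq : x = (x ^ (q:ℤ)) ^ a * (x ^ (r:ℤ)) ^ b := by
      calc x = x ^ (a * q + b * r) := by rw [hab]; simp
        _ = (x ^ (q:ℤ)) ^ a * (x ^ (r:ℤ)) ^ b := by
            rw [zpow_add, mul_comm a, mul_comm b, zpow_mul, zpow_mul]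
    rw [hxeq]
    exact T.mul_mem (T.zpow_mem hxq a) (T.zpow_mem hxr b)
  have hnpow : n = q ^ n.primeFactorsList.length :=
    Nat.eq_prime_pow_of_unique_prime_dvd hn0 (fun {d} hd hdn => hqonly d hd hdn)
  set k := n.primeFactorsList.length with hkdef
  have hqdvd : q ∣ n := Nat.minFac_dvd n
  clear_value n q k
  have hk0 : k ≠ 0 := by
    intro h
    rw [h, pow_zero] at hnpow
    exact hn1 hnpow
  -- card T = q^(k-1)
  have hTnormG' := hTnormG _ hmaxT
  have hqk : q ^ k = q ^ (k - 1) * q := by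
    rw [← pow_succ]
    congr 1
    omega
  have hcardzq : Nat.card ↥(Subgroup.zpowers (x ^ q)) = q ^ (k - 1) := by
    rw [Nat.card_zpowers, orderOf_pow, ← hndef, Nat.gcd_comm, Nat.gcd_eq_left hqdvd,
      hnpow, hqk, Nat.mul_div_cancel _ hq.pos]
  have hzqT : Subgroup.zpowers (x ^ q) ≤ T :=
    (Subgroup.zpowers_le).mpr (hpowT q hq hqdvd)
  have hdvd1 : q ^ (k - 1) ∣ Nat.card ↥T := hcardzq ▸ Subgroup.card_dvd_of_le hzqT
  have hcardMq : Nat.card ↥M = q ^ k := by rw [hcardM]; exact hnpow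
  have hdvd2 : Nat.card ↥T ∣ q ^ k := hcardMq ▸ Subgroup.card_dvd_of_le hmaxT.1.le
  have hneq : Nat.card ↥T ≠ q ^ k := by
    intro h
    exact hmaxT.1.ne (Subgroup.eq_of_le_of_card_ge hmaxT.1.le (by omega))
  obtain ⟨j, hjk, hTj⟩ := (Nat.dvd_prime_pow hq).mp hdvd2
  have hjne : j ≠ k := fun h => hneq (h ▸ hTj)
  have hj1 : q ^ (k - 1) ∣ q ^ j := hTj ▸ hdvd1
  have hjge : k - 1 ≤ j := (Nat.pow_dvd_pow_iff_le_right hq.one_lt).mp hj1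
  have hcardT : Nat.card ↥T = q ^ (k - 1) := by
    rw [hTj]
    congr 1
    omega
  have hcomm : ∀ a b : G, a ∈ M → b ∈ M → a * b = b * a := by
    intro a b ha hb
    rw [← hzp] at ha hb
    obtain ⟨i, rfl⟩ := ha
    obtain ⟨j, rfl⟩ := hb
    exact ((Commute.refl x).zpow_zpow i j)
  exact ⟨T, q, k, hq, hk0, hmaxT, hTnormG', hproper, hcardMq, hcardT,
    IsPGroup.of_card hcardMq, hcomm⟩

end Structure2

section MainHelpers
variable {G : Type*} [Group G]

lemma botNormal : (⊥ : Subgroup G).Normal :=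
  ⟨fun n hn g => by simpa [Subgroup.mem_bot] using hn⟩

lemma eq_bot_of_two_pgroups {p q : ℕ} [Fact p.Prime] [Fact q.Prime] (hne : p ≠ q)
    {H : Subgroup G} (h1 : IsPGroup p H) (h2 : IsPGroup q H) : H = ⊥ :=
  disjoint_self.mp (IsPGroup.disjoint_of_ne p q hne _ _ h1 h2)

lemma le_of_pgroup_qquotient {p q : ℕ} [Fact p.Prime] [Fact q.Prime] (hne : p ≠ q)
    {K P : Subgroup G} (hK : K.Normal) (hq : IsPGroup q (G ⧸ K)) (hp : IsPGroup p P) :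
    P ≤ K := by
  haveI := hK
  have h1 : IsPGroup p (P.map (QuotientGroup.mk' K)) := hp.map _
  have h2 : IsPGroup q (P.map (QuotientGroup.mk' K)) := hq.to_subgroup _
  have h4 := eq_bot_of_two_pgroups hne h1 h2
  rw [Subgroup.map_eq_bot_iff, QuotientGroup.ker_mk'] at h4
  exact h4

lemma htopcard : Nat.card ↥(⊤ : Subgroup G) = Nat.card G :=
  Nat.card_congr Subgroup.topEquiv.toEquiv

end MainHelpers

theorem corollary1_5_aux (G : Type*) [Group G] [Finite G] (hnn : ¬ Group.IsNilpotent G)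
    (hchain : ∀ M₁ M₂ : Subgroup G, IsCoatom M₁ → IsMaximalSubgroupOf M₂ M₁ →
      SubnormalIn M₁ ∨ SubnormalIn M₂) :
    (¬ Group.IsNilpotent G ∧ ∀ H : Subgroup G, H < ⊤ → Group.IsNilpotent H) ∧
    (∀ p : ℕ, p.Prime → ∀ P : Sylow p G, ∀ x y : (P : Subgroup G), x * y = y * x) := by
  classical
  -- a non-normal coatom exists
  obtain ⟨M, hM, hMn⟩ : ∃ M : Subgroup G, IsCoatom M ∧ ¬ M.Normal := by
    by_contra h
    push_neg at h
    exact hnn (((isNilpotent_of_finite_tfae (G := G)).out 2 0).mp h)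
  have hMnotsn : ¬ SubnormalIn M := fun h => hMn (h.normal_of_isCoatom hM)
  have hsubM : ∀ T : Subgroup G, IsMaximalSubgroupOf T M → SubnormalIn T :=
    fun T hT => (hchain M T hM hT).resolve_left hMnotsn
  obtain ⟨T, q, k, hq, hk0, hmaxT, hTnorm, hproper, hcardM, hcardT, hpM, hcommM⟩ :=
    nonnormal_coatom_structure hM hMn hsubM
  haveI hqfact : Fact q.Prime := ⟨hq⟩
  -- M is a Sylow q-subgroup
  obtain ⟨Q, hMQ⟩ := hpM.exists_le_sylow
  have hQM : (Q : Subgroup G) = M := by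
    rcases hMQ.lt_or_eq with hlt | heq
    · exfalso
      have htop : (Q : Subgroup G) = ⊤ := hM.2 _ hlt
      have hpG : IsPGroup q G := by
        intro g
        obtain ⟨kk, hkk⟩ := Q.2 ⟨g, htop ▸ Subgroup.mem_top g⟩
        exact ⟨kk, by simpa [Subtype.ext_iff] using hkk⟩
      exact hnn hpG.isNilpotent
    · exact heq.symm
  have hnormalizer : Subgroup.normalizer (M : Set G) = M := by
    rcases (Subgroup.le_normalizer (H := M)).lt_or_eq with hlt | heq
    · exact absurd (Subgroup.normalizer_eq_top_iff.mp (hM.2 _ hlt)) hMn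
    · exact heq.symm
  have hP : Subgroup.normalizer ((Q : Subgroup G) : Set G) ≤ Subgroup.centralizer (Q : Set G) := by
    have hset : (Q : Set G) = (M : Set G) := by rw [← hQM]; rfl
    rw [hQM, hnormalizer]
    intro m hm
    rw [Subgroup.mem_centralizer_iff]
    intro y hy
    rw [hset] at hy
    exact hcommM y m hy hm
  haveI : (Q : Subgroup G).FiniteIndex := ⟨Subgroup.index_ne_zero_of_finite⟩
  set K := (MonoidHom.transferSylow Q hP).ker with hKdef
  have hcomp : Subgroup.IsComplement' K Q := MonoidHom.ker_transferSylow_isComplement' Q hP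
  have hKnorm : K.Normal := MonoidHom.normal_ker _
  have hKMcard : Nat.card ↥K * Nat.card ↥M = Nat.card G := by
    have := hcomp.card_mul
    rwa [hQM] at this
  have hKpos : (0:ℕ) < Nat.card ↥K := Nat.card_pos
  have hGcard : Nat.card G = Nat.card ↥K * q ^ k := by rw [← hKMcard, hcardM]
  have hKindex : K.index = q ^ k := by
    have h1 := Subgroup.card_mul_index K
    rw [hGcard] at h1
    exact Nat.eq_of_mul_eq_mul_left hKpos h1
  have hGpos : Nat.card G ≠ 0 := Nat.card_pos.ne'
  have hqK : ¬ q ∣ Nat.card ↥K := MonoidHom.not_dvd_card_ker_transferSylow Q hP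
  have hfactq : (Nat.card G).factorization q = k := by
    have := congrArg (fun f => f q) (Nat.factorization_mul hKpos.ne' (pow_ne_zero k hq.pos.ne'))
    simp only [Finsupp.add_apply] at this
    rw [Nat.factorization_eq_zero_of_not_dvd hqK, hq.factorization_pow, Finsupp.single_apply,
      if_pos rfl, zero_add] at this
    rw [hGcard]
    exact this
  have hqGK : IsPGroup q (G ⧸ K) := IsPGroup.of_card
    (by rw [show Nat.card (G ⧸ K) = K.index from rfl, hKindex])
  -- Claim A: Sylow p-subgroups for p ≠ q are normal
  have hsylnorm : ∀ (p : ℕ) (hp : Fact p.Prime), p ≠ q → ∀ P : Sylow p G,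
      (P : Subgroup G).Normal := by
    intro p hp hpq P
    haveI := hp
    have hPK : (P : Subgroup G) ≤ K := le_of_pgroup_qquotient hpq hKnorm hqGK P.2
    haveI := hKnorm
    have hfr : Subgroup.normalizer ((P : Subgroup G) : Set G) ⊔ K = ⊤ := Sylow.normalizer_sup_eq_top' P hPK
    by_cases hNtop : Subgroup.normalizer ((P : Subgroup G) : Set G) = ⊤
    · exact Subgroup.normalizer_eq_top_iff.mp hNtop
    obtain ⟨C, hC, hNC⟩ := exists_coatom_ge hNtop
    set Nr := Subgroup.normalizer ((P : Subgroup G) : Set G) with hNrdef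
    have hprod := card_sup_mul_card_inf Nr K hKnorm
    rw [hfr, htopcard] at hprod
    have hqk_dvd_Nr : q ^ k ∣ Nat.card ↥Nr := by
      refine ⟨Nat.card ↥(Nr ⊓ K), ?_⟩
      have h2 : Nat.card ↥K * (q ^ k * Nat.card ↥(Nr ⊓ K)) =
          Nat.card ↥K * (Nat.card ↥Nr) := by
        calc Nat.card ↥K * (q ^ k * Nat.card ↥(Nr ⊓ K))
            = (Nat.card ↥K * q ^ k) * Nat.card ↥(Nr ⊓ K) := by ring
          _ = Nat.card G * Nat.card ↥(Nr ⊓ K) := by rw [← hGcard]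
          _ = Nat.card ↥Nr * Nat.card ↥K := hprod
          _ = Nat.card ↥K * Nat.card ↥Nr := by ring
      exact (Nat.eq_of_mul_eq_mul_left hKpos h2).symm
    have hqkC : q ^ k ∣ Nat.card ↥C := hqk_dvd_Nr.trans (Subgroup.card_dvd_of_le hNC)
    obtain ⟨R⟩ := (inferInstance : Nonempty (Sylow q ↥C))
    have hCpos : Nat.card ↥C ≠ 0 := Nat.card_pos.ne'
    have hfacCq : (Nat.card ↥C).factorization q = k := by
      have h1 : k ≤ (Nat.card ↥C).factorization q :=
        (Nat.Prime.pow_dvd_iff_le_factorization hq hCpos).mp hqkC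
      have h2 : q ^ ((Nat.card ↥C).factorization q) ∣ Nat.card G :=
        (Nat.ordProj_dvd _ q).trans (Subgroup.card_subgroup_dvd_card C)
      have h3 : (Nat.card ↥C).factorization q ≤ k :=
        hfactq ▸ (Nat.Prime.pow_dvd_iff_le_factorization hq hGpos).mp h2
      omega
    have hcardR : Nat.card ↥(R.1.map C.subtype) = q ^ ((Nat.card G).factorization q) := by
      have e : Nat.card ↥(R.1.map C.subtype) = Nat.card ↥(R : Subgroup ↥C) :=
        (Nat.card_congr ((R : Subgroup ↥C).equivMapOfInjective C.subtype
          C.subtype_injective).toEquiv).symm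
      rw [e, R.card_eq_multiplicity, hfacCq, hfactq]
    set RG : Sylow q G := Sylow.ofCard (R.1.map C.subtype) hcardR with hRGdef
    obtain ⟨g, hg⟩ := MulAction.exists_smul_eq G Q RG
    have hconj : Subgroup.map (MulAut.conj g).toMonoidHom M = R.1.map C.subtype := by
      calc Subgroup.map (MulAut.conj g).toMonoidHom M
          = ((g • Q : Sylow q G) : Subgroup G) := by rw [← hQM]; rfl
        _ = (RG : Subgroup G) := by rw [hg]
        _ = R.1.map C.subtype := by rw [hRGdef, Sylow.coe_ofCard]
    have hcoatomR : IsCoatom (R.1.map C.subtype) := hconj ▸ isCoatom_map (MulAut.conj g) hM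
    have hCR : C = R.1.map C.subtype := by
      rcases (Subgroup.map_subtype_le (R : Subgroup ↥C)).lt_or_eq with hlt | heq
      · exact absurd (hcoatomR.2 _ hlt) hC.1
      · exact heq.symm
    have hqC : IsPGroup q ↥(R.1.map C.subtype) := R.isPGroup'.map _
    have hPC : (P : Subgroup G) ≤ R.1.map C.subtype := by
      rw [← hCR]
      exact Subgroup.le_normalizer.trans hNC
    have hPbot : (P : Subgroup G) = ⊥ := eq_bot_of_two_pgroups hpq P.2 (hqC.to_le hPC)
    rw [hPbot]
    exact botNormal
  -- Claim B: Sylow p-subgroups for p ≠ q are abelian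
  have hsylab : ∀ (p : ℕ) (hp : Fact p.Prime), p ≠ q → ∀ P : Sylow p G,
      ∀ x y : ↥(P : Subgroup G), x * y = y * x := by
    intro p hp hpq P
    haveI := hp
    haveI hPn : (P : Subgroup G).Normal := hsylnorm p hp hpq P
    set D := ⁅(P : Subgroup G), (P : Subgroup G)⁆ with hDdef
    have hDP : D ≤ (P : Subgroup G) := by
      rw [hDdef, Subgroup.commutator_le]
      intro g1 h1 g2 h2
      rw [commutatorElement_def]
      exact Subgroup.mul_mem _ (Subgroup.mul_mem _ (Subgroup.mul_mem _ h1 h2)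
        (Subgroup.inv_mem _ h1)) (Subgroup.inv_mem _ h2)
    haveI hDnorm : D.Normal := Subgroup.commutator_normal _ _
    have hdisj : Disjoint (P : Subgroup G) M := IsPGroup.disjoint_of_ne p q hpq _ _ P.2 hpM
    have habel : D = ⊥ := by
      rcases (le_sup_right : M ≤ D ⊔ M).lt_or_eq with hlt | heq
      · have htop : D ⊔ M = ⊤ := hM.2 _ hlt
        have hPD : (P : Subgroup G) ≤ D := by
          intro y hy
          have hy' : y ∈ (↑(D ⊔ M) : Set G) := by rw [htop]; trivial
          rw [Subgroup.normal_mul] at hy'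
          obtain ⟨d, hd, m, hm, rfl⟩ := hy'
          have hmP : m ∈ (P : Subgroup G) := by
            have hmeq : m = d⁻¹ * (d * m) := by group
            rw [hmeq]
            exact Subgroup.mul_mem _ (Subgroup.inv_mem _ (hDP hd)) hy
          have hm1 : m = 1 := Subgroup.disjoint_def.mp hdisj hmP hm
          rw [hm1]
          show d * 1 ∈ D
          rw [mul_one]
          exact hd
        have hPDeq : D = (P : Subgroup G) := le_antisymm hDP hPD
        haveI : Group.IsNilpotent ↥(P : Subgroup G) := P.isPGroup'.isNilpotent
        have hPbot : (P : Subgroup G) = ⊥ :=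
          eq_bot_of_commutator_eq_self (IsNilpotent.to_isSolvable (G := ↥(P : Subgroup G))) (by rw [← hDdef]; exact hPDeq)
        rw [hPDeq, hPbot]
      · have hDM : D ≤ M := le_sup_left.trans heq.symm.le
        exact eq_bot_iff.mpr (hdisj.le_bot.trans' (le_inf hDP hDM))
    intro x y
    apply Subtype.ext
    have hcxy : (x : G) * (y : G) * (x : G)⁻¹ * (y : G)⁻¹ ∈ D := Subgroup.commutator_mem_commutator x.2 y.2
    rw [habel, Subgroup.mem_bot] at hcxy
    have hcomm := commutatorElement_eq_one_iff_commute.mp hcxy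
    simpa using hcomm.eq
  -- Claim C: normal coatoms are nilpotent
  have hnormcoatom : ∀ C : Subgroup G, IsCoatom C → C.Normal → Group.IsNilpotent ↥C := by
    intro C hC hCnorm
    haveI := hCnorm
    have hMC : ¬ M ≤ C := by
      intro hle
      rcases hle.lt_or_eq with hlt | heq
      · exact hC.1 (hM.2 _ hlt)
      · exact hMn (heq ▸ hCnorm)
    have hsupMC : M ⊔ C = ⊤ := by
      rcases (le_sup_right : C ≤ M ⊔ C).lt_or_eq with hlt | heq
      · exact hC.2 _ hlt
      · exact absurd (le_sup_left.trans heq.symm.le) hMC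
    have hprod := card_sup_mul_card_inf M C hCnorm
    rw [hsupMC, htopcard] at hprod
    have hCpos : (0:ℕ) < Nat.card ↥C := Nat.card_pos
    have hicinf : C.index * Nat.card ↥(M ⊓ C) = q ^ k := by
      have h1 : Nat.card ↥C * (C.index * Nat.card ↥(M ⊓ C)) =
          Nat.card ↥C * q ^ k := by
        calc Nat.card ↥C * (C.index * Nat.card ↥(M ⊓ C))
            = (Nat.card ↥C * C.index) * Nat.card ↥(M ⊓ C) := by ring
          _ = Nat.card G * Nat.card ↥(M ⊓ C) := by rw [Subgroup.card_mul_index]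
          _ = Nat.card ↥M * Nat.card ↥C := hprod
          _ = Nat.card ↥C * q ^ k := by rw [hcardM]; ring
      exact Nat.eq_of_mul_eq_mul_left hCpos h1
    have hicprime : C.index.Prime := index_card_prime_of_normal_coatom hC hCnorm
    have hicq : C.index = q := by
      have hdvd : C.index ∣ q ^ k := ⟨Nat.card ↥(M ⊓ C), hicinf.symm⟩
      exact (Nat.prime_dvd_prime_iff_eq hicprime hq).mp (hicprime.dvd_of_dvd_pow hdvd)
    have hinf : Nat.card ↥(M ⊓ C) = q ^ (k - 1) := by
      have hqk : q ^ k = q * q ^ (k - 1) := by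
        rw [← pow_succ']
        congr 1
        omega
      rw [hicq, hqk] at hicinf
      exact Nat.eq_of_mul_eq_mul_left hq.pos hicinf
    have hMCproper : M ⊓ C ≠ M := fun h => hMC (inf_eq_left.mp h)
    have hTMC : M ⊓ C = T := Subgroup.eq_of_le_of_card_ge
      (hproper _ inf_le_left hMCproper) (by rw [hcardT, hinf])
    have hTC : T ≤ C := hTMC ▸ inf_le_right
    have hCG : Nat.card ↥C * q = Nat.card G := by
      rw [← Subgroup.card_mul_index C, hicq]
    have hfacCq : (Nat.card ↥C).factorization q = k - 1 := by
      have h1 := congrArg (fun f => f q) (Nat.factorization_mul hCpos.ne' hq.pos.ne')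
      simp only [Finsupp.add_apply] at h1
      rw [hq.factorization_self, hCG, hfactq] at h1
      omega
    have hfacCp : ∀ p : ℕ, p.Prime → p ≠ q →
        (Nat.card ↥C).factorization p = (Nat.card G).factorization p := by
      intro p hp hpq
      have h1 := congrArg (fun f => f p) (Nat.factorization_mul hCpos.ne' hq.pos.ne')
      simp only [Finsupp.add_apply] at h1
      have hq0 : q.factorization p = 0 := Nat.factorization_eq_zero_of_not_dvd
        (fun hdvd => hpq ((Nat.prime_dvd_prime_iff_eq hp hq).mp hdvd))
      rw [hq0, hCG] at h1
      omega
    have hqGC : IsPGroup q (G ⧸ C) := IsPGroup.of_card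
      (by rw [show Nat.card (G ⧸ C) = C.index from rfl, hicq, pow_one])
    -- all Sylow subgroups of C are normal
    have hallsyl : ∀ (p : ℕ) (_hp : Fact p.Prime) (R : Sylow p ↥C),
        (R : Subgroup ↥C).Normal := by
      intro p hp R
      haveI := hp
      by_cases hpq : p = q
      · subst hpq
        apply sylow_all_normal_of_exists_normal (hTnorm.subgroupOf C) ?_ R
        have e : Nat.card ↥(T.subgroupOf C) = Nat.card ↥T :=
          Nat.card_congr (Subgroup.subgroupOfEquivOfLe hTC).toEquiv
        rw [e, hcardT, hfacCq]
      · obtain ⟨P₁⟩ := (inferInstance : Nonempty (Sylow p G))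
        have hP₁n : (P₁ : Subgroup G).Normal := hsylnorm p hp hpq P₁
        have hP₁C : (P₁ : Subgroup G) ≤ C := le_of_pgroup_qquotient hpq hCnorm hqGC P₁.2
        apply sylow_all_normal_of_exists_normal (hP₁n.subgroupOf C) ?_ R
        have e : Nat.card ↥((P₁ : Subgroup G).subgroupOf C) = Nat.card ↥(P₁ : Subgroup G) :=
          Nat.card_congr (Subgroup.subgroupOfEquivOfLe hP₁C).toEquiv
        rw [e, P₁.card_eq_multiplicity, hfacCp p hp.out hpq]
    exact ((isNilpotent_of_finite_tfae (G := ↥C)).out 3 0).mp hallsyl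
  -- assemble the result
  refine ⟨⟨hnn, ?_⟩, ?_⟩
  · intro H hH
    obtain ⟨C, hC, hHC⟩ := exists_coatom_ge hH.ne
    have hCnil : Group.IsNilpotent ↥C := by
      by_cases hCn : C.Normal
      · exact hnormcoatom C hC hCn
      · have hCnotsn : ¬ SubnormalIn C := fun h => hCn (h.normal_of_isCoatom hC)
        exact nonnormal_coatom_nilpotent hC hCn
          (fun T' hT' => (hchain C T' hC hT').resolve_left hCnotsn)
    haveI := hCnil
    haveI : Group.IsNilpotent ↥(H.subgroupOf C) := Subgroup.isNilpotent _
    exact nilpotent_of_mulEquiv (Subgroup.subgroupOfEquivOfLe hHC)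
  · intro p hp P x y
    haveI : Fact p.Prime := ⟨hp⟩
    by_cases hpq : p = q
    · subst hpq
      obtain ⟨g, hg⟩ := MulAction.exists_smul_eq G Q P
      have hPM : (P : Subgroup G) = Subgroup.map (MulAut.conj g).toMonoidHom M := by
        rw [← hg, ← hQM]
        rfl
      have hx : (x : G) ∈ Subgroup.map (MulAut.conj g).toMonoidHom M := by
        rw [← hPM]; exact x.2
      have hy : (y : G) ∈ Subgroup.map (MulAut.conj g).toMonoidHom M := by
        rw [← hPM]; exact y.2
      obtain ⟨a, ha, hax⟩ := hx
      obtain ⟨b, hb, hby⟩ := hy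
      have hxy : (x : G) * (y : G) = (y : G) * (x : G) := by
        rw [← hax, ← hby, ← map_mul, ← map_mul, hcommM a b ha hb]
      apply Subtype.ext
      rw [Subgroup.coe_mul, Subgroup.coe_mul]
      exact hxy
    · exact hsylab p ⟨hp⟩ hpq P x y

/-- Corollary 1.5: if `G` is non-nilpotent and every maximal chain `M₂ < M₁ < G` of
length 2 contains a proper subnormal subgroup of `G`, then `G` is a Schmidt group
with abelian Sylow subgroups. -/
theorem corollary1_5 (G : Type*) [Group G] [Finite G] (hnn : ¬ Group.IsNilpotent G)
    (hchain : ∀ M₁ M₂ : Subgroup G, IsCoatom M₁ → IsMaximalSubgroupOf M₂ M₁ →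
      SubnormalIn M₁ ∨ SubnormalIn M₂) :
    IsSchmidtGroup G ∧ AllSylowAbelian G :=
  corollary1_5_aux G hnn hchain
end

section
/- Let 𝔉 be a hereditary K-lattice saturated formation of finite groups containing all nilpotent groups, and let G be a finite group. If A ∈ 𝔉 and B ∈ 𝔉 are K-𝔉-subnormal subgroups of G, then the subgroup ⟨A, B⟩ generated by A and B belongs to 𝔉. (Lemma 2.4(ii)) -/
/-- A class of finite groups: a property of finite groups (in `Type 0`). -/
def GroupClass : Type 1 := ∀ (G : Type) [Group G] [Finite G], Prop

/-- `𝔉` is closed under isomorphism. -/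
def GroupClass.IsIsoClosed (𝔉 : GroupClass) : Prop :=
  ∀ (G : Type) [Group G] [Finite G] (H : Type) [Group H] [Finite H],
    Nonempty (G ≃* H) → 𝔉 G → 𝔉 H

/-- `𝔉` is a formation: it contains the trivial group, is closed under isomorphism,
is closed under quotients, and `G/(N₁ ⊓ N₂) ∈ 𝔉` whenever `G/N₁, G/N₂ ∈ 𝔉`. -/
def GroupClass.IsFormation (𝔉 : GroupClass) : Prop :=
  (∀ (G : Type) [Group G] [Finite G], Subsingleton G → 𝔉 G) ∧
  𝔉.IsIsoClosed ∧
  (∀ (G : Type) [Group G] [Finite G] (N : Subgroup G) [N.Normal], 𝔉 G → 𝔉 (G ⧸ N)) ∧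
  (∀ (G : Type) [Group G] [Finite G] (N₁ N₂ : Subgroup G) (h₁ : N₁.Normal) (h₂ : N₂.Normal),
    𝔉 (G ⧸ N₁) → 𝔉 (G ⧸ N₂) →
      (haveI : (N₁ ⊓ N₂).Normal := @Subgroup.normal_inf_normal _ _ N₁ N₂ h₁ h₂
       𝔉 (G ⧸ (N₁ ⊓ N₂))))

/-- `𝔉` is saturated: `G ∈ 𝔉` whenever `G/Φ(G) ∈ 𝔉`, where `Φ(G)` is the Frattini subgroup. -/
def GroupClass.IsSaturated (𝔉 : GroupClass) : Prop :=
  ∀ (G : Type) [Group G] [Finite G], 𝔉 (G ⧸ frattini G) → 𝔉 G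

/-- `𝔉` is hereditary: closed under taking subgroups. -/
def GroupClass.IsHereditary (𝔉 : GroupClass) : Prop :=
  ∀ (G : Type) [Group G] [Finite G] (H : Subgroup G), 𝔉 G → 𝔉 H

/-- `𝔉` contains all (finite) nilpotent groups. -/
def GroupClass.ContainsNilpotent (𝔉 : GroupClass) : Prop :=
  ∀ (G : Type) [Group G] [Finite G], Group.IsNilpotent G → 𝔉 G

/-- A subgroup `A` of `G` is `K`-`𝔉`-subnormal in `G` if there is a chain
`A = A₀ ≤ A₁ ≤ ⋯ ≤ Aₙ = G` such that for each `i`, either `Aᵢ` is normal in `Aᵢ₊₁`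
or `Aᵢ₊₁/(Aᵢ)_{Aᵢ₊₁} ∈ 𝔉`, where `(Aᵢ)_{Aᵢ₊₁}` is the normal core of `Aᵢ` in `Aᵢ₊₁`. -/
def KFSubnormal (𝔉 : GroupClass) {G : Type} [Group G] [Finite G] (A : Subgroup G) : Prop :=
  ∃ (n : ℕ) (c : ℕ → Subgroup G), c 0 = A ∧ c n = ⊤ ∧
    ∀ i < n, c i ≤ c (i + 1) ∧
      (((c i).subgroupOf (c (i + 1))).Normal ∨
        𝔉 ((c (i + 1)) ⧸ ((c i).subgroupOf (c (i + 1))).normalCore))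

/-- `𝔉` is a `K`-lattice formation: in every finite group the set of `K`-`𝔉`-subnormal
subgroups is closed under intersections and joins (i.e. it is a sublattice of the
lattice of all subgroups). -/
def GroupClass.IsKLattice (𝔉 : GroupClass) : Prop :=
  ∀ (G : Type) [Group G] [Finite G] (A B : Subgroup G),
    KFSubnormal 𝔉 A → KFSubnormal 𝔉 B →
      KFSubnormal 𝔉 (A ⊓ B) ∧ KFSubnormal 𝔉 (A ⊔ B)

set_option linter.unusedSectionVars false
set_option maxHeartbeats 4000000
open scoped Pointwise

/-! ### Auxiliary lemmas -/

namespace KFAux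

variable {𝔉 : GroupClass}

section Basic

variable {G : Type} [Group G] [Finite G]

lemma F_iso (hiso : 𝔉.IsIsoClosed) {H : Type} [Group H]
    [Finite H] (e : G ≃* H) (hG : 𝔉 G) : 𝔉 H := hiso G H ⟨e⟩ hG

lemma F_surj (hform : 𝔉.IsFormation) {H : Type} [Group H] [Finite H]
    (f : G →* H) (hf : Function.Surjective f) (hG : 𝔉 G) : 𝔉 H :=
  F_iso hform.2.1 (QuotientGroup.quotientKerEquivOfSurjective f hf) (hform.2.2.1 G f.ker hG)

lemma F_le (hform : 𝔉.IsFormation) (hher : 𝔉.IsHereditary)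
    {A B : Subgroup G} (h : B ≤ A) (hA : 𝔉 A) : 𝔉 B :=
  F_iso hform.2.1 (Subgroup.subgroupOfEquivOfLe h) (hher A (B.subgroupOf A) hA)

lemma F_map (hform : 𝔉.IsFormation) {H : Type} [Group H] [Finite H]
    (f : G →* H) {A : Subgroup G} (hA : 𝔉 A) : 𝔉 (A.map f) :=
  F_surj hform (f.subgroupMap A) (f.subgroupMap_surjective A) hA

lemma F_top (hform : 𝔉.IsFormation) (h : 𝔉 (⊤ : Subgroup G)) : 𝔉 G :=
  F_iso hform.2.1 Subgroup.topEquiv h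

lemma F_of_top (hform : 𝔉.IsFormation) (h : 𝔉 G) : 𝔉 (⊤ : Subgroup G) :=
  F_iso hform.2.1 Subgroup.topEquiv.symm h

lemma F_bot (hform : 𝔉.IsFormation) : 𝔉 (⊥ : Subgroup G) := hform.1 _ inferInstance

/-- Main tool 1: if there is a hom from `T` to an `𝔉`-group whose kernel lies in `S`,
then `T ⧸ (S.subgroupOf T).normalCore ∈ 𝔉`. -/
lemma F_core_of_hom (hform : 𝔉.IsFormation) (hher : 𝔉.IsHereditary)
    {S T : Subgroup G} {Q : Type} [Group Q] [Finite Q]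
    (ρ : T →* Q) (hQ : 𝔉 Q) (hker : ∀ x : T, ρ x = 1 → (x : G) ∈ S) :
    𝔉 (T ⧸ (S.subgroupOf T).normalCore) := by
  have hker' : ρ.ker ≤ (S.subgroupOf T).normalCore := by
    rw [Subgroup.normal_le_normalCore]
    intro x hx
    exact Subgroup.mem_subgroupOf.2 (hker x hx)
  have h1 : 𝔉 (T ⧸ ρ.ker) :=
    F_iso hform.2.1 (QuotientGroup.quotientKerEquivRange ρ).symm (hher Q ρ.range hQ)
  have hsurj : Function.Surjective
      (QuotientGroup.map ρ.ker (S.subgroupOf T).normalCore (MonoidHom.id _) hker') := by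
    rintro ⟨x⟩
    exact ⟨QuotientGroup.mk x, rfl⟩
  exact F_surj hform _ hsurj h1

/-- Main tool 2: push an `𝔉`-quotient through a surjection. -/
lemma F_push (hform : 𝔉.IsFormation) {W' : Type} [Group W'] [Finite W']
    (σ : G →* W') (hσ : Function.Surjective σ) {N : Subgroup G} [N.Normal] {N' : Subgroup W'}
    [N'.Normal] (h : ∀ x ∈ N, σ x ∈ N') (hF : 𝔉 (G ⧸ N)) : 𝔉 (W' ⧸ N') := by
  have h' : ∀ x ∈ N, ((QuotientGroup.mk' N').comp σ) x = 1 := by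
    intro x hx
    simpa [QuotientGroup.eq_one_iff] using h x hx
  have hsurj : Function.Surjective (QuotientGroup.lift N ((QuotientGroup.mk' N').comp σ) h') := by
    rintro ⟨y⟩
    obtain ⟨x, rfl⟩ := hσ y
    exact ⟨QuotientGroup.mk x, rfl⟩
  exact F_surj hform _ hsurj hF

lemma mem_normalCore_iff {H : Subgroup G} {x : G} :
    x ∈ H.normalCore ↔ ∀ b : G, b * x * b⁻¹ ∈ H := Iff.rfl

lemma normal_of_subgroupOf_top {S : Subgroup G} (h : (S.subgroupOf (⊤ : Subgroup G)).Normal) :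
    S.Normal := by
  constructor
  intro a ha g
  have := h.conj_mem ⟨a, Subgroup.mem_top a⟩ (Subgroup.mem_subgroupOf.2 ha) ⟨g, Subgroup.mem_top g⟩
  exact Subgroup.mem_subgroupOf.1 this

lemma chain_le_of_le {n : ℕ} {c : ℕ → Subgroup G}
    (hc : ∀ i < n, c i ≤ c (i + 1)) : ∀ j ≤ n, c 0 ≤ c j := by
  intro j
  induction j with
  | zero => exact fun _ => le_rfl
  | succ k ih =>
    intro hk
    exact (ih (Nat.le_of_succ_le hk)).trans (hc k (Nat.lt_of_succ_le hk))

lemma exists_transition {p : ℕ → Prop} [DecidablePred p] {n : ℕ} (h0 : ¬ p 0) (hn : p n) :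
    ∃ j < n, ¬ p j ∧ p (j + 1) := by
  induction n with
  | zero => exact absurd hn h0
  | succ m ih =>
    by_cases hm : p m
    · obtain ⟨j, hj, h⟩ := ih hm
      exact ⟨j, hj.trans (Nat.lt_succ_self m), h⟩
    · exact ⟨m, Nat.lt_succ_self m, hm, hn⟩

lemma F_top_core (hform : 𝔉.IsFormation) {S : Subgroup G} (h : 𝔉 (G ⧸ S.normalCore)) :
    𝔉 ((⊤ : Subgroup G) ⧸ (S.subgroupOf (⊤ : Subgroup G)).normalCore) := by
  refine F_push (W' := (⊤ : Subgroup G)) hform (Subgroup.topEquiv (G := G)).symm.toMonoidHom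
    (fun y => ⟨(y : G), by ext; simp⟩) (fun x hx => ?_) h
  intro b
  refine Subgroup.mem_subgroupOf.2 ?_
  simpa using hx (b : G)

/-- Transport a top-step of a chain down to `G`. -/
lemma top_step (hform : 𝔉.IsFormation) {S T : Subgroup G} (hT : T = ⊤)
    (hbr : (S.subgroupOf T).Normal ∨
      𝔉 (T ⧸ (S.subgroupOf T).normalCore)) :
    S.Normal ∨ 𝔉 (G ⧸ S.normalCore) := by
  subst hT
  rcases hbr with h | h
  · exact Or.inl (normal_of_subgroupOf_top h)
  · right
    have hσ : Function.Surjective (Subgroup.topEquiv (G := G)).toMonoidHom :=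
      fun y => ⟨⟨y, Subgroup.mem_top y⟩, rfl⟩
    refine F_push hform Subgroup.topEquiv.toMonoidHom hσ (fun x hx => ?_) h
    intro b
    have := hx ⟨b, Subgroup.mem_top b⟩
    exact Subgroup.mem_subgroupOf.1 this

lemma KF_of_normal {N : Subgroup G} (hN : N.Normal) : KFSubnormal 𝔉 N := by
  refine ⟨1, fun i => match i with | 0 => N | _ + 1 => ⊤, rfl, rfl, ?_⟩
  intro i hi
  interval_cases i
  exact ⟨le_top, Or.inl (hN.subgroupOf ⊤)⟩

lemma KF_two_step (hform : 𝔉.IsFormation) {U X : Subgroup G} (hUX : U ≤ X) (hXF : 𝔉 X)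
    (hXcore : 𝔉 (G ⧸ X.normalCore)) : KFSubnormal 𝔉 U := by
  refine ⟨2, fun i => match i with | 0 => U | 1 => X | _ + 2 => ⊤, rfl, rfl, ?_⟩
  intro i hi
  interval_cases i
  · exact ⟨hUX, Or.inr (hform.2.2.1 _ _ hXF)⟩
  · exact ⟨le_top, Or.inr (F_top_core hform hXcore)⟩

/-- K-𝔉-subnormality is preserved by surjective homomorphisms. -/
lemma KF_map (hform : 𝔉.IsFormation) {H : Type} [Group H] [Finite H] (f : G →* H)
    (hf : Function.Surjective f)
    {A : Subgroup G} (hA : KFSubnormal 𝔉 A) : KFSubnormal 𝔉 (A.map f) := by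
  obtain ⟨n, c, hc0, hcn, hstep⟩ := hA
  refine ⟨n, fun i => (c i).map f, by show (c 0).map f = _; rw [hc0], ?_, ?_⟩
  · show (c n).map f = ⊤
    rw [hcn, ← MonoidHom.range_eq_map, MonoidHom.range_eq_top.2 hf]
  intro i hi
  obtain ⟨hle, hbr⟩ := hstep i hi
  refine ⟨Subgroup.map_mono hle, ?_⟩
  rcases hbr with hnorm | hF
  · left
    constructor
    intro x hmem g
    rw [Subgroup.mem_subgroupOf] at hmem ⊢
    obtain ⟨a, ha, hfa⟩ := hmem
    obtain ⟨b, hb, hfb⟩ := g.2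
    have h2 : b * a * b⁻¹ ∈ c i := by
      have := hnorm.conj_mem ⟨a, hle ha⟩ (Subgroup.mem_subgroupOf.2 ha) ⟨b, hb⟩
      exact Subgroup.mem_subgroupOf.1 this
    refine ⟨b * a * b⁻¹, h2, ?_⟩
    simp [map_mul, hfa, hfb]
  · right
    have hsurj : Function.Surjective (f.subgroupMap (c (i+1))) :=
      f.subgroupMap_surjective (c (i+1))
    refine F_push hform (f.subgroupMap (c (i+1))) hsurj (fun x hx => ?_) hF
    rw [mem_normalCore_iff] at hx ⊢
    intro b
    obtain ⟨t, rfl⟩ := hsurj b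
    have := hx t
    rw [Subgroup.mem_subgroupOf] at this ⊢
    have hcoe : ((f.subgroupMap (c (i+1)) t * f.subgroupMap (c (i+1)) x *
        (f.subgroupMap (c (i+1)) t)⁻¹ : (c (i+1)).map f) : H)
        = f ((t * x * t⁻¹ : (c (i+1))) : G) := by
      simp [map_mul]
    rw [hcoe]
    exact ⟨((t * x * t⁻¹ : (c (i+1))) : G), this, rfl⟩

/-- K-𝔉-subnormality passes to intermediate subgroups. -/
lemma KF_subgroupOf (hform : 𝔉.IsFormation) (hher : 𝔉.IsHereditary) {A X : Subgroup G}
    (hA : KFSubnormal 𝔉 A) (hAX : A ≤ X) :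
    KFSubnormal 𝔉 (A.subgroupOf X) := by
  obtain ⟨n, c, hc0, hcn, hstep⟩ := hA
  refine ⟨n, fun i => (c i ⊓ X).subgroupOf X, ?_, ?_, ?_⟩
  · show (c 0 ⊓ X).subgroupOf X = _
    rw [hc0, inf_eq_left.2 hAX]
  · show (c n ⊓ X).subgroupOf X = ⊤
    rw [hcn, top_inf_eq, Subgroup.subgroupOf_self]
  intro i hi
  obtain ⟨hle, hbr⟩ := hstep i hi
  constructor
  · intro z hz
    rw [Subgroup.mem_subgroupOf] at hz ⊢
    exact ⟨hle hz.1, hz.2⟩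
  rcases hbr with hnorm | hF
  · left
    constructor
    intro x hmem g
    rw [Subgroup.mem_subgroupOf] at hmem ⊢
    have hx1 : ((x : X) : G) ∈ c i := hmem.1
    have hg1 : ((g : X) : G) ∈ c (i+1) := (Subgroup.mem_subgroupOf.1 g.2).1
    have hconj := hnorm.conj_mem ⟨((x : X) : G), hle hx1⟩
      (Subgroup.mem_subgroupOf.2 hx1) ⟨((g : X) : G), hg1⟩
    have h2 : ((g : X) : G) * ((x : X) : G) * ((g : X) : G)⁻¹ ∈ c i :=
      Subgroup.mem_subgroupOf.1 hconj
    have hcoe : (((g * x * g⁻¹ : _) : X) : G)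
        = ((g : X) : G) * ((x : X) : G) * ((g : X) : G)⁻¹ := by
      push_cast
      rfl
    have h3 : (((g * x * g⁻¹ : _) : X) : G) ∈ c i := by rw [hcoe]; exact h2
    exact ⟨h3, ((g * x * g⁻¹ : _) : X).2⟩
  · right
    set T' := (c (i+1) ⊓ X).subgroupOf X with hT'
    have hχmem : ∀ x : T', ((x : X) : G) ∈ c (i+1) := fun x => (Subgroup.mem_subgroupOf.1 x.2).1
    let χ : T' →* (c (i+1)) := MonoidHom.mk' (fun x => ⟨((x : X) : G), hχmem x⟩)
      (fun a b => by ext; push_cast; rfl)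
    refine F_core_of_hom hform hher
      ((QuotientGroup.mk' ((c i).subgroupOf (c (i+1))).normalCore).comp χ) hF ?_
    intro x hx
    have hker : χ x ∈ ((c i).subgroupOf (c (i+1))).normalCore := by
      rwa [MonoidHom.comp_apply, ← MonoidHom.mem_ker, QuotientGroup.ker_mk'] at hx
    have hci : ((x : X) : G) ∈ c i :=
      Subgroup.mem_subgroupOf.1 (((c i).subgroupOf (c (i+1))).normalCore_le hker)
    exact Subgroup.mem_subgroupOf.2 ⟨hci, (x : X).2⟩

end Basic

section Conj

variable {W : Type} [Group W] [Finite W]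

/-- conjugate of a subgroup -/
noncomputable def cmap (g : W) (D : Subgroup W) : Subgroup W :=
  D.map (MulAut.conj g).toMonoidHom

lemma mem_cmap {g x : W} {D : Subgroup W} : x ∈ cmap g D ↔ g⁻¹ * x * g ∈ D := by
  rw [cmap, Subgroup.mem_map_equiv, MulAut.conj_symm_apply]

lemma cmap_one {D : Subgroup W} : cmap 1 D = D := by
  ext x; simp [mem_cmap]

lemma cmap_cmap {a b : W} {D : Subgroup W} : cmap a (cmap b D) = cmap (a * b) D := by
  ext x; simp [mem_cmap, mul_assoc]

lemma cmap_le_normal {g : W} {D M : Subgroup W} (hM : M.Normal) (h : D ≤ M) :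
    cmap g D ≤ M := by
  intro x hx
  rw [mem_cmap] at hx
  have := hM.conj_mem _ (h hx) g
  simpa [mul_assoc] using this

lemma KF_cmap (hform : 𝔉.IsFormation) (g : W) {D : Subgroup W} (hD : KFSubnormal 𝔉 D) :
    KFSubnormal 𝔉 (cmap g D) :=
  KF_map hform _ (MulAut.conj g).surjective hD

lemma F_cmap (hform : 𝔉.IsFormation) (g : W) {D : Subgroup W} (hD : 𝔉 D) : 𝔉 (cmap g D) :=
  F_iso hform.2.1 (D.equivMapOfInjective _ (MulAut.conj g).injective) hD

lemma conj_iSup_normal (D : Subgroup W) :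
    (⨆ g : W, cmap g D).Normal ∧ D ≤ ⨆ g : W, cmap g D := by
  constructor
  · constructor
    intro x hx g
    have hle : cmap g (⨆ h : W, cmap h D) ≤ ⨆ h : W, cmap h D := by
      rw [cmap, Subgroup.map_iSup]
      refine iSup_le fun h => ?_
      rw [show (Subgroup.map (MulAut.conj g).toMonoidHom (cmap h D)) = cmap g (cmap h D) from rfl,
        cmap_cmap]
      exact le_iSup (fun k => cmap k D) (g * h)
    refine hle ?_
    rw [mem_cmap]
    simpa [mul_assoc] using hx
  · intro x hx
    have : x ∈ cmap 1 D := by rwa [cmap_one]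
    exact le_iSup (fun k => cmap k D) 1 this

/-- Iterated joins of K-𝔉-subnormal 𝔉-subgroups. -/
lemma fin_join (hform : 𝔉.IsFormation)
    (hJ : ∀ A B : Subgroup W, KFSubnormal 𝔉 A → KFSubnormal 𝔉 B → 𝔉 A → 𝔉 B → 𝔉 ↥(A ⊔ B))
    (hlatW : ∀ A B : Subgroup W, KFSubnormal 𝔉 A → KFSubnormal 𝔉 B → KFSubnormal 𝔉 (A ⊔ B))
    {ι : Type} [Finite ι] (f : ι → Subgroup W)
    (h : ∀ i, KFSubnormal 𝔉 (f i) ∧ 𝔉 (f i)) :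
    𝔉 ↥(⨆ i, f i) ∧ KFSubnormal 𝔉 (⨆ i, f i) := by
  letI := Fintype.ofFinite ι
  letI := Classical.decEq ι
  have key : ∀ s : Finset ι, 𝔉 ↥(s.sup f) ∧ KFSubnormal 𝔉 (s.sup f) := by
    intro s
    induction s using Finset.induction_on with
    | empty =>
      rw [Finset.sup_empty]
      exact ⟨F_bot hform, KF_of_normal (by infer_instance : (⊥ : Subgroup W).Normal)⟩
    | insert _ _ hx ih =>
      rw [Finset.sup_insert]
      exact ⟨hJ _ _ (h _).1 ih.2 (h _).2 ih.1, hlatW _ _ (h _).1 ih.2⟩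
  have huniv : (Finset.univ.sup f) = ⨆ i, f i :=
    le_antisymm (Finset.sup_le fun i _ => le_iSup f i)
      (iSup_le fun i => Finset.le_sup (Finset.mem_univ i))
  rw [← huniv]
  exact key _

end Conj

section Card

variable {G : Type} [Group G] [Finite G]

lemma card_lt_of_ne_top {H : Subgroup G} (h : H ≠ ⊤) : Nat.card H < Nat.card G := by
  have hle : Nat.card H ≤ Nat.card G :=
    Nat.card_le_card_of_injective _ Subtype.val_injective
  rcases hle.lt_or_eq with hlt | heq
  · exact hlt
  · exact absurd (Subgroup.eq_top_of_card_eq H heq) h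

lemma card_quot_lt {N : Subgroup G} [N.Normal] (hN : N ≠ ⊥) :
    Nat.card (G ⧸ N) < Nat.card G := by
  have hmul := Subgroup.card_eq_card_quotient_mul_card_subgroup N
  have h1 : 1 < Nat.card N := (Subgroup.one_lt_card_iff_ne_bot N).2 hN
  have h2 : 0 < Nat.card (G ⧸ N) := Nat.card_pos
  calc Nat.card (G ⧸ N) = Nat.card (G ⧸ N) * 1 := by ring
    _ < Nat.card (G ⧸ N) * Nat.card N := by
          exact Nat.mul_lt_mul_of_le_of_lt (le_refl _) h1 h2
    _ = Nat.card G := hmul.symm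

lemma sub_eq_of_le_of_card_le {H K : Subgroup G} (h : H ≤ K)
    (hc : Nat.card K ≤ Nat.card H) : H = K := by
  have e : Nat.card (H.subgroupOf K) = Nat.card H :=
    Nat.card_congr (Subgroup.subgroupOfEquivOfLe h).toEquiv
  have htop : H.subgroupOf K = ⊤ :=
    Subgroup.eq_top_of_card_eq _
      (le_antisymm (Nat.card_le_card_of_injective _ Subtype.val_injective) (by rw [e]; exact hc))
  exact le_antisymm h (Subgroup.subgroupOf_eq_top.1 htop)

/-- If the monolith `M₀` contains a nontrivial `M₀`-invariant `𝔉`-subgroup, then `M₀ ∈ 𝔉`. -/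
lemma monolith_F (hform : 𝔉.IsFormation) (hlat : 𝔉.IsKLattice)
    (hJlt : ∀ (Δ : Type) [Group Δ] [Finite Δ], Nat.card Δ < Nat.card G →
      ∀ A B : Subgroup Δ, KFSubnormal 𝔉 A → KFSubnormal 𝔉 B → 𝔉 A → 𝔉 B → 𝔉 ↥(A ⊔ B))
    {M₀ : Subgroup G} (hM₀n : M₀.Normal) (hM₀top : M₀ ≠ ⊤)
    (hmono : ∀ N : Subgroup G, N.Normal → N ≠ ⊥ → M₀ ≤ N)
    {D₀ : Subgroup G} (hD₀ : D₀ ≠ ⊥) (hDM : D₀ ≤ M₀)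
    (hDinv : ∀ m ∈ M₀, ∀ d ∈ D₀, m * d * m⁻¹ ∈ D₀)
    (hDF : 𝔉 D₀) : 𝔉 M₀ := by
  obtain ⟨hJn, hDle⟩ := conj_iSup_normal D₀
  have hJM₀ : (⨆ g : G, cmap g D₀) ≤ M₀ := iSup_le fun g => cmap_le_normal hM₀n hDM
  have hJbot : (⨆ g : G, cmap g D₀) ≠ ⊥ := by
    intro hbot
    exact hD₀ (le_bot_iff.1 (hbot ▸ hDle))
  have hJeq : (⨆ g : G, cmap g D₀) = M₀ := le_antisymm hJM₀ (hmono _ hJn hJbot)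
  have hEle : ∀ g : G, cmap g D₀ ≤ M₀ := fun g => cmap_le_normal hM₀n hDM
  have hEinv : ∀ g : G, ∀ m ∈ M₀, ∀ x ∈ cmap g D₀, m * x * m⁻¹ ∈ cmap g D₀ := by
    intro g m hm x hx
    rw [mem_cmap] at hx ⊢
    have hm' : g⁻¹ * m * g ∈ M₀ := by
      have := hM₀n.conj_mem m hm g⁻¹
      simpa using this
    have hid : g⁻¹ * (m * x * m⁻¹) * g
        = (g⁻¹ * m * g) * (g⁻¹ * x * g) * (g⁻¹ * m * g)⁻¹ := by group
    rw [hid]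
    exact hDinv _ hm' _ hx
  set e : G → Subgroup M₀ := fun g => (cmap g D₀).subgroupOf M₀ with he
  have hen : ∀ g : G, (e g).Normal := by
    intro g
    constructor
    intro x hx m
    rw [Subgroup.mem_subgroupOf] at hx ⊢
    have : ((m : G) * (x : G) * (m : G)⁻¹) ∈ cmap g D₀ := hEinv g m m.2 x hx
    simpa using this
  have hekf : ∀ g : G, KFSubnormal 𝔉 (e g) ∧ 𝔉 (e g) := by
    intro g
    refine ⟨KF_of_normal (hen g), ?_⟩
    exact F_iso hform.2.1 (Subgroup.subgroupOfEquivOfLe (hEle g)).symm (F_cmap hform g hDF)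
  have hcard : Nat.card M₀ < Nat.card G := card_lt_of_ne_top hM₀top
  obtain ⟨hFJ, -⟩ := fin_join hform (fun A B hA hB hFA hFB => hJlt M₀ hcard A B hA hB hFA hFB)
    (fun A B hA hB => (hlat M₀ A B hA hB).2) e hekf
  have hetop : (⨆ g : G, e g) = ⊤ := by
    apply Subgroup.map_injective (M₀.subtype_injective)
    rw [Subgroup.map_iSup]
    have h1 : ∀ g : G, Subgroup.map M₀.subtype (e g) = cmap g D₀ := by
      intro g
      rw [he]
      rw [Subgroup.subgroupOf_map_subtype, inf_eq_left.2 (hEle g)]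
    calc (⨆ g : G, Subgroup.map M₀.subtype (e g)) = ⨆ g : G, cmap g D₀ := iSup_congr h1
      _ = M₀ := hJeq
      _ = Subgroup.map M₀.subtype ⊤ := by
          rw [← MonoidHom.range_eq_map, Subgroup.range_subtype]
  rw [hetop] at hFJ
  exact F_top hform hFJ

lemma sup_subgroupOf_top {A B X : Subgroup G} (hA : A ≤ X) (hB : B ≤ X) (h : A ⊔ B = X) :
    A.subgroupOf X ⊔ B.subgroupOf X = ⊤ := by
  apply Subgroup.map_injective X.subtype_injective
  rw [Subgroup.map_sup, Subgroup.subgroupOf_map_subtype, Subgroup.subgroupOf_map_subtype,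
    inf_eq_left.2 hA, inf_eq_left.2 hB, h, ← MonoidHom.range_eq_map, Subgroup.range_subtype]

end Card

end KFAux

open KFAux

theorem KF_join_aux (𝔉 : GroupClass) (hform : 𝔉.IsFormation) (hsat : 𝔉.IsSaturated)
    (hher : 𝔉.IsHereditary) (hlat : 𝔉.IsKLattice) (hnil : 𝔉.ContainsNilpotent) :
    ∀ (n : ℕ) (G : Type) [Group G] [Finite G], Nat.card G ≤ n →
      ∀ A B : Subgroup G, KFSubnormal 𝔉 A → KFSubnormal 𝔉 B → 𝔉 A → 𝔉 B → 𝔉 ↥(A ⊔ B) := by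
  intro n
  induction n using Nat.strong_induction_on with
  | _ n IH =>
  intro G _ _ hn A B hA hB hFA hFB
  classical
  have IH' : ∀ (Δ : Type) [Group Δ] [Finite Δ], Nat.card Δ < Nat.card G →
      ∀ A' B' : Subgroup Δ, KFSubnormal 𝔉 A' → KFSubnormal 𝔉 B' →
        𝔉 A' → 𝔉 B' → 𝔉 ↥(A' ⊔ B') := by
    intro Δ _ _ hΔ
    exact IH (Nat.card Δ) (lt_of_lt_of_le hΔ hn) Δ le_rfl
  by_cases hsub : A ⊔ B = ⊤
  swap
  · -- reduction into H := A ⊔ B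
    have hAH : A ≤ A ⊔ B := le_sup_left
    have hBH : B ≤ A ⊔ B := le_sup_right
    have hcard : Nat.card ↥(A ⊔ B) < Nat.card G := card_lt_of_ne_top hsub
    have h1 := IH' ↥(A ⊔ B) hcard (A.subgroupOf (A ⊔ B)) (B.subgroupOf (A ⊔ B))
      (KF_subgroupOf hform hher hA hAH) (KF_subgroupOf hform hher hB hBH)
      (F_iso hform.2.1 (Subgroup.subgroupOfEquivOfLe hAH).symm hFA)
      (F_iso hform.2.1 (Subgroup.subgroupOfEquivOfLe hBH).symm hFB)
    rw [sup_subgroupOf_top hAH hBH rfl] at h1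
    exact F_top hform h1
  · rw [hsub]
    suffices hG : 𝔉 G from F_of_top hform hG
    rcases subsingleton_or_nontrivial G with hss | hnt
    · exact hform.1 G hss
    by_cases hAtop : A = ⊤
    · exact F_top hform (hAtop ▸ hFA)
    by_cases hBtop : B = ⊤
    · exact F_top hform (hBtop ▸ hFB)
    have hAbot : A ≠ ⊥ := by
      rintro rfl; rw [bot_sup_eq] at hsub; exact hBtop hsub
    have hBbot : B ≠ ⊥ := by
      rintro rfl; rw [sup_bot_eq] at hsub; exact hAtop hsub
    by_contra hGnot
    -- Step 1: all proper quotients are in 𝔉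
    have hquot : ∀ (N : Subgroup G) [N.Normal], N ≠ ⊥ → 𝔉 (G ⧸ N) := by
      intro N hNn hNb
      have hcard : Nat.card (G ⧸ N) < Nat.card G := card_quot_lt hNb
      have hπ : Function.Surjective (QuotientGroup.mk' N) := QuotientGroup.mk'_surjective N
      have h1 := IH' (G ⧸ N) hcard (A.map (QuotientGroup.mk' N)) (B.map (QuotientGroup.mk' N))
        (KF_map hform _ hπ hA) (KF_map hform _ hπ hB)
        (F_map hform _ hFA) (F_map hform _ hFB)
      have h2 : A.map (QuotientGroup.mk' N) ⊔ B.map (QuotientGroup.mk' N) = ⊤ := by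
        rw [← Subgroup.map_sup, hsub, ← MonoidHom.range_eq_map, MonoidHom.range_eq_top.2 hπ]
      rw [h2] at h1
      exact F_top hform h1
    -- Step 2: monolith
    have htopbot : (⊤ : Subgroup G) ≠ ⊥ := by
      obtain ⟨x, hx⟩ := exists_ne (1 : G)
      intro h
      exact hx (by simpa using (h ▸ (Subgroup.mem_top x) : x ∈ (⊥ : Subgroup G)))
    obtain ⟨k, ⟨M₀, hM₀n, hM₀b, hk⟩, hmin⟩ := Nat.lt_wfRel.wf.has_min
      {k | ∃ N : Subgroup G, N.Normal ∧ N ≠ ⊥ ∧ Nat.card N = k}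
      ⟨Nat.card ↥(⊤ : Subgroup G), ⊤, inferInstance, htopbot, rfl⟩
    have hmono : ∀ N : Subgroup G, N.Normal → N ≠ ⊥ → M₀ ≤ N := by
      intro N hNn hNb
      have hinfn : (M₀ ⊓ N).Normal := @Subgroup.normal_inf_normal _ _ M₀ N hM₀n hNn
      have hinfb : M₀ ⊓ N ≠ ⊥ := by
        intro h0
        have h3 := hform.2.2.2 G M₀ N hM₀n hNn (@hquot M₀ hM₀n hM₀b) (@hquot N hNn hNb)
        exact hGnot (F_iso hform.2.1
          ((QuotientGroup.quotientMulEquivOfEq h0).trans QuotientGroup.quotientBot) h3)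
      have hno := hmin (Nat.card ↥(M₀ ⊓ N)) ⟨M₀ ⊓ N, hinfn, hinfb, rfl⟩
      rw [← hk] at hno
      have heq : M₀ ⊓ N = M₀ := sub_eq_of_le_of_card_le inf_le_left (not_lt.1 hno)
      exact heq ▸ inf_le_right
    -- Step 3: top-step analysis
    have hstep1 : ∀ U : Subgroup G, KFSubnormal 𝔉 U → U ≠ ⊤ →
        U = ⊥ ∨ ∃ S : Subgroup G, S ≠ ⊤ ∧ M₀ ≤ S ∧ U ≤ S := by
      intro U hU hUtop
      obtain ⟨m, c, hc0, hcm, hstep⟩ := hU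
      have h0 : ¬ (c 0 = ⊤) := by rw [hc0]; exact hUtop
      obtain ⟨j, hj, hne, heqj⟩ := exists_transition (p := fun k => c k = ⊤) h0 hcm
      have hUc : U ≤ c j := hc0 ▸ chain_le_of_le (fun i hi => (hstep i hi).1) j (le_of_lt hj)
      obtain ⟨-, hbr⟩ := hstep j hj
      rcases top_step hform heqj hbr with hnorm | hpush
      · rcases eq_or_ne (c j) ⊥ with hcb | hcb
        · left; exact le_bot_iff.1 (hcb ▸ hUc)
        · right; exact ⟨c j, hne, hmono _ hnorm hcb, hUc⟩
      · rcases eq_or_ne ((c j).normalCore) ⊥ with hcb | hcb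
        · exact absurd (F_iso hform.2.1
            ((QuotientGroup.quotientMulEquivOfEq hcb).trans QuotientGroup.quotientBot) hpush)
            hGnot
        · right
          exact ⟨c j, hne, (hmono _ ((c j).normalCore_normal) hcb).trans ((c j).normalCore_le),
            hUc⟩
    have hM₀top : M₀ ≠ ⊤ := by
      intro htop
      rcases hstep1 A hA hAtop with h | ⟨S, hStop, hMS, -⟩
      · exact hAbot h
      · exact hStop (top_le_iff.1 (htop ▸ hMS))
    have hC1 : ∀ U : Subgroup G, KFSubnormal 𝔉 U → U ≠ ⊤ → M₀ ⊔ U ≠ ⊤ := by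
      intro U hU hUtop
      rcases hstep1 U hU hUtop with h | ⟨S, hStop, hMS, hUS⟩
      · rw [h, sup_bot_eq]; exact hM₀top
      · intro h; exact hStop (top_le_iff.1 (h ▸ sup_le hMS hUS))
    -- Step 4: Frattini and a maximal subgroup avoiding the monolith
    have hfr : ¬ M₀ ≤ frattini G := by
      intro hle
      have hfb : frattini G ≠ ⊥ := fun h => hM₀b (le_bot_iff.1 (h ▸ hle))
      exact hGnot (hsat G (hquot _ hfb))
    obtain ⟨L, hLco, hLM⟩ : ∃ L : Subgroup G, IsCoatom L ∧ ¬ M₀ ≤ L := by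
      by_contra hcon
      push_neg at hcon
      apply hfr
      rw [frattini, Order.radical]
      exact le_iInf₂ fun a ha => hcon a ha
    have hLtop : L ≠ ⊤ := hLco.1
    have hML : M₀ ⊔ L = ⊤ :=
      hLco.2 _ (lt_of_le_of_ne le_sup_right (fun h => hLM (by rw [h]; exact le_sup_left)))
    -- Step 5: M₀ ⊔ C ∈ 𝔉 for C a proper nontrivial K-𝔉-subnormal 𝔉-subgroup
    have hFX : ∀ C : Subgroup G, KFSubnormal 𝔉 C → 𝔉 C → C ≠ ⊥ → C ≠ ⊤ → 𝔉 ↥(M₀ ⊔ C) := by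
      intro C hC hFC hCbot hCtop
      have hXtop : M₀ ⊔ C ≠ ⊤ := hC1 C hC hCtop
      set X := M₀ ⊔ C with hXdef
      have hMX : M₀ ≤ X := le_sup_left
      have hCX : C ≤ X := le_sup_right
      have hcardX : Nat.card X < Nat.card G := card_lt_of_ne_top hXtop
      set C' := C.subgroupOf X with hC'def
      set M' := M₀.subgroupOf X with hM'def
      have hC'KF : KFSubnormal 𝔉 C' := KF_subgroupOf hform hher hC hCX
      have hC'F : 𝔉 C' := F_iso hform.2.1 (Subgroup.subgroupOfEquivOfLe hCX).symm hFC
      have hM'n : M'.Normal := hM₀n.subgroupOf X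
      have hsupΓ : M' ⊔ C' = ⊤ := by
        rw [hM'def, hC'def, sup_comm]
        exact sup_subgroupOf_top hCX hMX (by rw [sup_comm, hXdef])
      have hJΓ := fun A' B' hA' hB' hFA' hFB' => IH' ↥X hcardX A' B' hA' hB' hFA' hFB'
      have hend : 𝔉 M₀ → 𝔉 ↥X := by
        intro hFM₀
        have h1 := hJΓ M' C' (KF_of_normal hM'n) hC'KF
          (F_iso hform.2.1 (Subgroup.subgroupOfEquivOfLe hMX).symm hFM₀) hC'F
        rw [hsupΓ] at h1
        exact F_top hform h1
      obtain ⟨hQ'n, hC'Q⟩ := conj_iSup_normal C'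
      obtain ⟨hQ'F, hQ'KF⟩ := fin_join hform hJΓ
        (fun A' B' hA' hB' => (hlat ↥X A' B' hA' hB').2)
        (fun x : ↥X => cmap x C') (fun x => ⟨KF_cmap hform x hC'KF, F_cmap hform x hC'F⟩)
      set Q' := ⨆ x : ↥X, cmap x C' with hQ'def
      by_cases hMQ : M' ≤ Q'
      · have hQtop : Q' = ⊤ := top_unique (by rw [← hsupΓ]; exact sup_le hMQ hC'Q)
        rw [hQtop] at hQ'F
        exact F_top hform hQ'F
      by_cases hD0 : M' ⊓ Q' = ⊥
      · -- the monolith is abelian in this case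
        have hcomm : ∀ q ∈ Q', ∀ m' ∈ M', q * m' * q⁻¹ * m'⁻¹ = 1 := by
          intro q hq m' hm'
          have h1 : q * m' * q⁻¹ * m'⁻¹ ∈ M' :=
            mul_mem (hM'n.conj_mem m' hm' q) (inv_mem hm')
          have h2 : q * m' * q⁻¹ * m'⁻¹ ∈ Q' := by
            have h3 : m' * q⁻¹ * m'⁻¹ ∈ Q' := hQ'n.conj_mem _ (inv_mem hq) m'
            have h4 : q * (m' * q⁻¹ * m'⁻¹) ∈ Q' := mul_mem hq h3
            have h5 : q * m' * q⁻¹ * m'⁻¹ = q * (m' * q⁻¹ * m'⁻¹) := by group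
            rw [h5]; exact h4
          have h6 : q * m' * q⁻¹ * m'⁻¹ ∈ M' ⊓ Q' := ⟨h1, h2⟩
          rw [hD0] at h6
          exact Subgroup.mem_bot.1 h6
        set Cz := Subgroup.centralizer (M₀ : Set G) with hCzdef
        have hQCz : Q'.map X.subtype ≤ Cz := by
          intro y hy
          obtain ⟨q, hq, rfl⟩ := hy
          rw [Subgroup.mem_centralizer_iff]
          intro m hm
          have hmX : m ∈ X := hMX hm
          have h1 := hcomm q hq ⟨m, hmX⟩ (Subgroup.mem_subgroupOf.2 hm)
          have h2 : (q : G) * m * (q : G)⁻¹ * m⁻¹ = 1 := by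
            have h3 := congrArg (X.subtype) h1
            push_cast at h3
            simpa using h3
          have h4 : (q : G) * m * (q : G)⁻¹ = m := by
            rwa [mul_inv_eq_one] at h2
          have h5 : (q : G) * m = m * (q : G) := by
            have h6 := congrArg (· * (q : G)) h4
            simpa [mul_assoc] using h6
          exact h5.symm
        have hCzn : Cz.Normal := by
          constructor
          intro cz hcz g
          rw [Subgroup.mem_centralizer_iff] at hcz ⊢
          intro m hm
          have hm' : g⁻¹ * m * g ∈ M₀ := by
            have := hM₀n.conj_mem m hm g⁻¹
            simpa [mul_assoc] using this
          have h := hcz _ hm'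
          calc m * (g * cz * g⁻¹) = g * ((g⁻¹ * m * g) * cz) * g⁻¹ := by group
            _ = g * (cz * (g⁻¹ * m * g)) * g⁻¹ := by rw [h]
            _ = (g * cz * g⁻¹) * m := by group
        rcases eq_or_ne Cz ⊥ with hCz0 | hCz0
        · exfalso
          apply hCbot
          have hCle : C ≤ Q'.map X.subtype := by
            have h1 : C = C'.map X.subtype := by
              rw [hC'def, Subgroup.subgroupOf_map_subtype, inf_eq_left.2 hCX]
            rw [h1]
            exact Subgroup.map_mono hC'Q
          rw [← le_bot_iff]
          exact hCle.trans (hQCz.trans_eq hCz0)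
        · have hM₀Cz : M₀ ≤ Cz := hmono _ hCzn hCz0
          have hFM₀ : 𝔉 M₀ := by
            have hcommM : ∀ a b : M₀, a * b = b * a := by
              intro a b
              have hb := hM₀Cz b.2
              rw [Subgroup.mem_centralizer_iff] at hb
              exact Subtype.ext (hb (a : G) a.2)
            letI : CommGroup M₀ := { (inferInstance : Group M₀) with mul_comm := hcommM }
            exact hnil M₀ inferInstance
          exact hend hFM₀
      · -- the monolith contains a nontrivial invariant 𝔉-subgroup
        have hD'n : (M' ⊓ Q').Normal := @Subgroup.normal_inf_normal _ _ M' Q' hM'n hQ'n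
        have hD₀b : (M' ⊓ Q').map X.subtype ≠ ⊥ := by
          intro h
          apply hD0
          exact Subgroup.map_injective X.subtype_injective
            (h.trans (Subgroup.map_bot X.subtype).symm)
        have hD₀M : (M' ⊓ Q').map X.subtype ≤ M₀ := by
          calc (M' ⊓ Q').map X.subtype ≤ M'.map X.subtype := Subgroup.map_mono inf_le_left
            _ = M₀ := by rw [hM'def, Subgroup.subgroupOf_map_subtype, inf_eq_left.2 hMX]
        have hD₀F : 𝔉 ((M' ⊓ Q').map X.subtype) := by
          have h1 : 𝔉 ↥(M' ⊓ Q') := F_le hform hher inf_le_right hQ'F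
          exact F_iso hform.2.1 ((M' ⊓ Q').equivMapOfInjective _ X.subtype_injective) h1
        have hD₀inv : ∀ m ∈ M₀, ∀ d ∈ (M' ⊓ Q').map X.subtype,
            m * d * m⁻¹ ∈ (M' ⊓ Q').map X.subtype := by
          intro m hm d hd
          obtain ⟨d', hd', rfl⟩ := hd
          have hm' : (⟨m, hMX hm⟩ : X) * d' * (⟨m, hMX hm⟩ : X)⁻¹ ∈ M' ⊓ Q' :=
            hD'n.conj_mem d' hd' _
          exact ⟨_, hm', rfl⟩
        exact hend (monolith_F hform hlat IH' hM₀n hM₀top hmono hD₀b hD₀M hD₀inv hD₀F)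
    -- Step 6: the final contradiction
    have hFXA : 𝔉 ↥(M₀ ⊔ A) := hFX A hA hFA hAbot hAtop
    have hFXB : 𝔉 ↥(M₀ ⊔ B) := hFX B hB hFB hBbot hBtop
    haveI := hM₀n
    have hcoreX : ∀ C : Subgroup G, (M₀ ⊔ C).normalCore ≠ ⊥ := by
      intro C
      have h1 : M₀ ≤ (M₀ ⊔ C).normalCore := Subgroup.normal_le_normalCore.2 le_sup_left
      exact fun h => hM₀b (le_bot_iff.1 (h ▸ h1))
    have hU1 : KFSubnormal 𝔉 ((M₀ ⊔ A) ⊓ L) := KF_two_step hform inf_le_left hFXA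
      (hquot _ (hcoreX A))
    have hU2 : KFSubnormal 𝔉 ((M₀ ⊔ B) ⊓ L) := KF_two_step hform inf_le_left hFXB
      (hquot _ (hcoreX B))
    have hUKF : KFSubnormal 𝔉 (((M₀ ⊔ A) ⊓ L) ⊔ ((M₀ ⊔ B) ⊓ L)) := (hlat G _ _ hU1 hU2).2
    have hUtop : ((M₀ ⊔ A) ⊓ L) ⊔ ((M₀ ⊔ B) ⊓ L) ≠ ⊤ := by
      intro h
      exact hLtop (top_le_iff.1 (h ▸ sup_le inf_le_right inf_le_right))
    apply hC1 _ hUKF hUtop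
    have hded : ∀ Z : Subgroup G, M₀ ≤ Z → Z ≤ M₀ ⊔ (Z ⊓ L) := by
      intro Z hMZ z hz
      have h1 : z ∈ M₀ ⊔ L := by rw [hML]; exact Subgroup.mem_top z
      have hzml : z ∈ (M₀ : Set G) * (L : Set G) := by
        rw [← Subgroup.normal_mul M₀ L]
        exact SetLike.mem_coe.2 h1
      obtain ⟨m, hm, l, hl, rfl⟩ := hzml
      have hlZ : l ∈ Z := by
        have h2 : m⁻¹ * (m * l) ∈ Z := mul_mem (inv_mem (hMZ hm)) hz
        simpa using h2
      exact mul_mem ((le_sup_left : M₀ ≤ M₀ ⊔ (Z ⊓ L)) hm)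
        ((le_sup_right : Z ⊓ L ≤ M₀ ⊔ (Z ⊓ L)) (Subgroup.mem_inf.2 ⟨hlZ, hl⟩))
    rw [eq_top_iff, ← hsub]
    calc A ⊔ B ≤ (M₀ ⊔ A) ⊔ (M₀ ⊔ B) := sup_le_sup le_sup_right le_sup_right
      _ ≤ (M₀ ⊔ ((M₀ ⊔ A) ⊓ L)) ⊔ (M₀ ⊔ ((M₀ ⊔ B) ⊓ L)) :=
          sup_le_sup (hded _ le_sup_left) (hded _ le_sup_left)
      _ ≤ M₀ ⊔ (((M₀ ⊔ A) ⊓ L) ⊔ ((M₀ ⊔ B) ⊓ L)) := by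
          refine sup_le (sup_le le_sup_left ?_) (sup_le le_sup_left ?_)
          · exact le_trans le_sup_left le_sup_right
          · exact le_trans le_sup_right le_sup_right

/-- Lemma 2.4(ii): let `𝔉` be a hereditary `K`-lattice saturated formation containing
all nilpotent groups. If `A, B ∈ 𝔉` are `K`-`𝔉`-subnormal subgroups of `G`, then
`⟨A, B⟩ ∈ 𝔉`. -/
theorem lemma2_4_ii (𝔉 : GroupClass) (hform : 𝔉.IsFormation) (hsat : 𝔉.IsSaturated)
    (hher : 𝔉.IsHereditary) (hlat : 𝔉.IsKLattice) (hnil : 𝔉.ContainsNilpotent)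
    (G : Type) [Group G] [Finite G] (A B : Subgroup G)
    (hA : KFSubnormal 𝔉 A) (hB : KFSubnormal 𝔉 B) (hAF : 𝔉 A) (hBF : 𝔉 B) :
    𝔉 (A ⊔ B : Subgroup G) := by
  exact KF_join_aux 𝔉 hform hsat hher hlat hnil (Nat.card G) G le_rfl A B hA hB hAF hBF
end

section
/- Let σ = {σ_i : i ∈ I} be a partition of the set of all primes. If a finite group G is σ-soluble, then for every i ∈ I the group G possesses a Hall σ_i-subgroup, i.e., a subgroup H that is a σ_i-group whose index in G is divisible by no prime in σ_i. (Lemma 2.5) -/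
/-- A `π`-group: every prime dividing the order of `G` lies in `π`. -/
def IsPiGroup (π : Set ℕ) (G : Type*) [Group G] : Prop :=
  ∀ p : ℕ, p.Prime → p ∣ Nat.card G → p ∈ π

/-- `σ` is a partition of the set of all primes: each block consists of primes and
every prime belongs to exactly one block. -/
def IsPrimePartition {ι : Type*} (σ : ι → Set ℕ) : Prop :=
  (∀ i, ∀ p ∈ σ i, p.Prime) ∧ ∀ p : ℕ, p.Prime → ∃! i, p ∈ σ i

/-- A σ-primary group: a `σ i`-group for some `i`. -/
def SigmaPrimary {ι : Type*} (σ : ι → Set ℕ) (G : Type*) [Group G] : Prop :=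
  ∃ i, IsPiGroup (σ i) G

/-- A σ-nilpotent group: an internal direct product of σ-primary groups, i.e. there are
normal σ-primary subgroups which are independent and generate the whole group. -/
def SigmaNilpotent {ι : Type*} (σ : ι → Set ℕ) (G : Type*) [Group G] : Prop :=
  ∃ (n : ℕ) (N : Fin n → Subgroup G),
    (∀ j, (N j).Normal) ∧ (∀ j, SigmaPrimary σ (N j)) ∧
    iSupIndep N ∧ (⨆ j, N j) = ⊤

/-- `(K, H)` is a chief factor of `G`: both are normal in `G`, `K < H`, and no normal
subgroup of `G` lies strictly between `K` and `H`. The factor group is `H/K`.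
(Since `K` is normal in `G`, `K.subgroupOf H` is normal in `H`, hence equals its
normal core in `H`, so `H ⧸ (K.subgroupOf H).normalCore` is the factor group `H/K`.) -/
def IsChiefFactor (G : Type*) [Group G] (K H : Subgroup G) : Prop :=
  K.Normal ∧ H.Normal ∧ K < H ∧
    ∀ L : Subgroup G, L.Normal → K ≤ L → L ≤ H → L = K ∨ L = H

/-- `G` is σ-soluble: every chief factor of `G` is σ-primary. -/
def SigmaSoluble {ι : Type*} (σ : ι → Set ℕ) (G : Type*) [Group G] : Prop :=
  ∀ K H : Subgroup G, IsChiefFactor G K H →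
    SigmaPrimary σ (H ⧸ (K.subgroupOf H).normalCore)

section Aux

lemma isPiGroup_of_card_eq {π : Set ℕ} {A B : Type*} [Group A] [Group B]
    (h : Nat.card A = Nat.card B) (hA : IsPiGroup π A) : IsPiGroup π B :=
  fun p hp hd => hA p hp (h ▸ hd)

lemma sigmaPrimary_of_card_eq {ι : Type*} {σ : ι → Set ℕ} {A B : Type*} [Group A] [Group B]
    (h : Nat.card A = Nat.card B) : SigmaPrimary σ A → SigmaPrimary σ B :=
  fun ⟨j, hj⟩ => ⟨j, isPiGroup_of_card_eq h hj⟩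

lemma card_chief_factor {G : Type*} [Group G] (K H : Subgroup G) (hK : K.Normal) :
    Nat.card (H ⧸ (K.subgroupOf H).normalCore) = K.relIndex H := by
  haveI := hK
  rw [Subgroup.normalCore_eq_self]
  rfl

lemma sigmaSoluble_quotient {ι : Type*} (σ : ι → Set ℕ) {G : Type*} [Group G]
    (hsol : SigmaSoluble σ G) (N : Subgroup G) [N.Normal] : SigmaSoluble σ (G ⧸ N) := by
  intro K' H' hcf
  obtain ⟨hK'n, hH'n, hKH', hmin⟩ := hcf
  set f := QuotientGroup.mk' N with hf_def
  have hf : Function.Surjective f := QuotientGroup.mk'_surjective N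
  have hker : f.ker = N := QuotientGroup.ker_mk' N
  set K := K'.comap f with hKdef
  set H := H'.comap f with hHdef
  have hKn : K.Normal := hK'n.comap f
  have hHn : H.Normal := hH'n.comap f
  have hmapK : K.map f = K' := Subgroup.map_comap_eq_self_of_surjective hf _
  have hmapH : H.map f = H' := Subgroup.map_comap_eq_self_of_surjective hf _
  have hcf2 : IsChiefFactor G K H := by
    refine ⟨hKn, hHn, ?_, ?_⟩
    · refine lt_of_le_of_ne (Subgroup.comap_mono hKH'.le) ?_
      intro h
      exact hKH'.ne (by rw [← hmapK, h, hmapH])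
    · intro L hLn hKL hLH
      have hLc : (L.map f).comap f = L :=
        Subgroup.comap_map_eq_self (le_trans (Subgroup.ker_le_comap f K') hKL)
      rcases hmin (L.map f) (hLn.map f hf)
          (by rw [← hmapK]; exact Subgroup.map_mono hKL)
          (by rw [← hmapH]; exact Subgroup.map_mono hLH) with h | h
      · left; rw [← hLc, h]
      · right; rw [← hLc, h]
  have hprim := hsol K H hcf2
  have hcard : Nat.card (H ⧸ (K.subgroupOf H).normalCore)
      = Nat.card (H' ⧸ (K'.subgroupOf H').normalCore) := by
    rw [card_chief_factor K H hKn, card_chief_factor K' H' hK'n, hKdef,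
      Subgroup.relIndex_comap, hmapH]
  exact sigmaPrimary_of_card_eq hcard hprim

lemma hall_aux {ι : Type} (σ : ι → Set ℕ) (hσ : IsPrimePartition σ) (i : ι) :
    ∀ n : ℕ, ∀ (G : Type) [Group G] [Finite G], Nat.card G = n → SigmaSoluble σ G →
      ∃ H : Subgroup G, IsPiGroup (σ i) H ∧
        ∀ p : ℕ, p.Prime → p ∣ H.index → p ∉ σ i := by
  intro n
  induction n using Nat.strong_induction_on with
  | _ n ih =>
  intro G _ _ hn hsol
  by_cases htriv : Nat.card G = 1
  · refine ⟨⊥, ?_, ?_⟩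
    · intro p hp hd
      rw [Subgroup.card_bot] at hd
      exact absurd (Nat.dvd_one.mp hd) hp.ne_one
    · intro p hp hd
      rw [Subgroup.index_bot, htriv] at hd
      exact absurd (Nat.dvd_one.mp hd) hp.ne_one
  · -- pick a minimal nontrivial normal subgroup N
    have hStop : (⊤ : Subgroup G) ∈ {M : Subgroup G | M.Normal ∧ M ≠ ⊥} := by
      refine ⟨inferInstance, fun h => htriv ?_⟩
      rw [← Subgroup.card_top (G := G), h, Subgroup.card_bot]
    obtain ⟨N, ⟨hNnorm, hNbot⟩, hNmin⟩ :=
      Set.Finite.exists_minimalFor id {M : Subgroup G | M.Normal ∧ M ≠ ⊥}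
        (Set.toFinite _) ⟨⊤, hStop⟩
    haveI := hNnorm
    have hcardN : 1 < Nat.card N := (Subgroup.one_lt_card_iff_ne_bot (H := N)).mpr hNbot
    -- N is sigma-primary
    have hcfN : IsChiefFactor G ⊥ N := by
      refine ⟨inferInstance, hNnorm, bot_lt_iff_ne_bot.mpr hNbot, fun L hLn _ hLN => ?_⟩
      by_cases hL : L = ⊥
      · exact Or.inl hL
      · exact Or.inr (le_antisymm hLN (hNmin ⟨hLn, hL⟩ hLN))
    have hNprim : SigmaPrimary σ N := by
      refine sigmaPrimary_of_card_eq ?_ (hsol ⊥ N hcfN)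
      rw [Subgroup.bot_subgroupOf, Subgroup.normalCore_eq_self]
      exact Nat.card_congr (QuotientGroup.quotientBot (G := N)).toEquiv
    -- apply induction to the quotient
    have hQcard : Nat.card (G ⧸ N) = N.index := rfl
    have hindpos : 0 < N.index := Nat.pos_of_ne_zero Subgroup.index_ne_zero_of_finite
    have hlt : N.index < n := by
      rw [← hn, ← Subgroup.card_mul_index N]
      calc N.index = 1 * N.index := (one_mul _).symm
        _ < Nat.card N * N.index := by
            exact (Nat.mul_lt_mul_right hindpos).mpr hcardN
    obtain ⟨H', hH'pi, hH'Hall⟩ := ih N.index hlt (G ⧸ N) rfl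
      (sigmaSoluble_quotient σ hsol N)
    set f := QuotientGroup.mk' N with hf_def
    have hf : Function.Surjective f := QuotientGroup.mk'_surjective N
    set H := H'.comap f with hHdef
    have hNH : N ≤ H := by
      rw [← QuotientGroup.ker_mk' N]
      exact Subgroup.ker_le_comap f H'
    have hHind : H.index = H'.index := Subgroup.index_comap_of_surjective (H := H') hf
    have hH'indpos : 0 < H'.index := Nat.pos_of_ne_zero Subgroup.index_ne_zero_of_finite
    have hcardH : Nat.card H = Nat.card N * Nat.card H' := by
      have h1 : Nat.card H * H.index = Nat.card G := Subgroup.card_mul_index H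
      have h2 : Nat.card H' * H'.index = N.index := Subgroup.card_mul_index H'
      have h3 : Nat.card N * N.index = Nat.card G := Subgroup.card_mul_index N
      refine Nat.eq_of_mul_eq_mul_right hH'indpos ?_
      rw [← hHind] at h2 ⊢
      calc Nat.card H * H.index = Nat.card G := h1
        _ = Nat.card N * N.index := h3.symm
        _ = Nat.card N * (Nat.card H' * H.index) := by rw [h2]
        _ = Nat.card N * Nat.card H' * H.index := by ring
    by_cases hc : ∀ q : ℕ, q.Prime → q ∣ Nat.card N → q ∉ σ i
    · -- case: no prime of N lies in σ i; use Schur-Zassenhaus inside H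
      set N₁ := N.subgroupOf H with hN₁def
      haveI : N₁.Normal := Subgroup.normal_subgroupOf
      have hcardN₁ : Nat.card N₁ = Nat.card N :=
        Nat.card_congr (Subgroup.subgroupOfEquivOfLe hNH).toEquiv
      have hNpos : 0 < Nat.card N := Nat.card_pos
      have hindN₁ : N₁.index = Nat.card H' := by
        have h1 : Nat.card N₁ * N₁.index = Nat.card H := Subgroup.card_mul_index N₁
        refine Nat.eq_of_mul_eq_mul_left hNpos ?_
        rw [← hcardN₁] at hcardH ⊢
        rw [← hcardH]
        rw [h1]
      have hcop : Nat.Coprime (Nat.card N₁) N₁.index := by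
        rw [Nat.coprime_iff_gcd_eq_one]
        by_contra hg
        obtain ⟨p, pp, pdvd⟩ := Nat.exists_prime_and_dvd hg
        have h1 : p ∣ Nat.card N := by
          rw [← hcardN₁]; exact pdvd.trans (Nat.gcd_dvd_left _ _)
        have h2 : p ∈ σ i := by
          refine hH'pi p pp ?_
          rw [← hindN₁]; exact pdvd.trans (Nat.gcd_dvd_right _ _)
        exact hc p pp h1 h2
      obtain ⟨K, hK⟩ := Subgroup.exists_right_complement'_of_coprime hcop
      have hcardK : Nat.card K = Nat.card H' := by
        have h2 : Nat.card N₁ * Nat.card K = Nat.card H := hK.card_mul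
        have h3 : Nat.card N₁ * N₁.index = Nat.card H := Subgroup.card_mul_index N₁
        have hKpos : 0 < Nat.card N₁ := by rw [hcardN₁]; exact hNpos
        have h4 := Nat.eq_of_mul_eq_mul_left hKpos (h2.trans h3.symm)
        rw [h4, hindN₁]
      set K' := K.map H.subtype with hK'def
      have hcardK' : Nat.card K' = Nat.card H' := by
        rw [← hcardK]
        exact (Nat.card_congr (Subgroup.equivMapOfInjective K H.subtype
          H.subtype_injective).toEquiv).symm
      have hK'pos : 0 < Nat.card K' := Nat.card_pos
      have hindK' : K'.index = Nat.card N * H.index := by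
        have h1 : Nat.card K' * K'.index = Nat.card G := Subgroup.card_mul_index K'
        have h2 : Nat.card H * H.index = Nat.card G := Subgroup.card_mul_index H
        refine Nat.eq_of_mul_eq_mul_left hK'pos ?_
        rw [h1, ← h2, hcardH, hcardK']; ring
      refine ⟨K', ?_, ?_⟩
      · intro p hp hd
        rw [hcardK'] at hd
        exact hH'pi p hp hd
      · intro p hp hd
        rw [hindK'] at hd
        rcases hp.dvd_mul.mp hd with h | h
        · exact hc p hp h
        · rw [hHind] at h
          exact hH'Hall p hp h
    · -- case: some prime of N lies in σ i; then N is a σ i-group and H works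
      push_neg at hc
      obtain ⟨q, hq, hqN, hqi⟩ := hc
      obtain ⟨j, hj⟩ := hNprim
      have hqj : q ∈ σ j := hj q hq hqN
      obtain ⟨i₀, _, huniq⟩ := hσ.2 q hq
      have hij : j = i := (huniq j hqj).trans (huniq i hqi).symm
      have hNpi : IsPiGroup (σ i) N := hij ▸ hj
      refine ⟨H, ?_, ?_⟩
      · intro p hp hd
        rw [hcardH] at hd
        rcases hp.dvd_mul.mp hd with h | h
        · exact hNpi p hp h
        · exact hH'pi p hp h
      · intro p hp hd
        rw [hHind] at hd
        exact hH'Hall p hp hd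

end Aux

/-- Lemma 2.5: if `G` is σ-soluble for a partition `σ` of the primes, then for every
`i` the group `G` possesses a Hall `σ i`-subgroup: a `σ i`-subgroup whose index is
divisible by no prime in `σ i`. -/
theorem lemma2_5 {ι : Type} (σ : ι → Set ℕ) (hσ : IsPrimePartition σ)
    (G : Type) [Group G] [Finite G] (hsol : SigmaSoluble σ G) :
    ∀ i : ι, ∃ H : Subgroup G, IsPiGroup (σ i) H ∧
      ∀ p : ℕ, p.Prime → p ∣ H.index → p ∉ σ i :=
  fun i => hall_aux σ hσ i (Nat.card G) G rfl hsol
end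

section
/- Let σ = {σ_i : i ∈ I} be a partition of the set of all primes, and let A be a σ-subnormal subgroup of a finite group G. If A is a σ_i-group for some i ∈ I, then A ≤ O_{σ_i}(G), where O_{σ_i}(G) is the largest normal σ_i-subgroup of G. (Lemma 2.7) -/
/-- `A` is σ-subnormal in `G`: there is a chain `A = A₀ ≤ ⋯ ≤ Aₙ = G` with each
term either normal in the next or with σ-primary quotient `Aᵢ₊₁/(Aᵢ)_{Aᵢ₊₁}`. -/
def SigmaSubnormal {ι : Type*} (σ : ι → Set ℕ) {G : Type*} [Group G] (A : Subgroup G) : Prop :=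
  ∃ (n : ℕ) (c : ℕ → Subgroup G), c 0 = A ∧ c n = ⊤ ∧
    ∀ i < n, c i ≤ c (i + 1) ∧
      (((c i).subgroupOf (c (i + 1))).Normal ∨
        SigmaPrimary σ ((c (i + 1)) ⧸ ((c i).subgroupOf (c (i + 1))).normalCore))

/-- Auxiliary: a supremum of normal subgroups is normal. -/
theorem normal_iSup_of_normal {G : Type*} [Group G] {ι : Sort*} (f : ι → Subgroup G)
    (h : ∀ i, (f i).Normal) : (⨆ i, f i).Normal := by
  constructor
  intro n hn g
  refine Subgroup.iSup_induction (C := fun x => g * x * g⁻¹ ∈ ⨆ i, f i) f hn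
    (fun i x hx => ?_) (by simpa using Subgroup.one_mem _) (fun x y hx hy => ?_)
  · exact le_iSup f i ((h i).conj_mem x hx g)
  · have := Subgroup.mul_mem _ hx hy
    simpa [mul_assoc] using this

/-- `O_π(G)`: the join of all normal `π`-subgroups of `G` (the largest normal
`π`-subgroup of `G`). -/
def piCore (π : Set ℕ) (G : Type*) [Group G] : Subgroup G :=
  ⨆ N : {N : Subgroup G // N.Normal ∧ IsPiGroup π N}, (N : Subgroup G)

section Helpers
variable {π : Set ℕ}

lemma isPiGroup_of_card_dvd {H K : Type*} [Group H] [Group K]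
    (h : Nat.card H ∣ Nat.card K) (hK : IsPiGroup π K) : IsPiGroup π H :=
  fun p hp hpd => hK p hp (hpd.trans h)

lemma isPiGroup_of_mulEquiv {H K : Type*} [Group H] [Group K] (e : H ≃* K)
    (hK : IsPiGroup π K) : IsPiGroup π H :=
  isPiGroup_of_card_dvd (by rw [Nat.card_congr e.toEquiv]) hK

lemma piCore_normal (π : Set ℕ) (G : Type*) [Group G] : (piCore π G).Normal :=
  normal_iSup_of_normal _ (fun N => N.2.1)

lemma le_piCore {G : Type*} [Group G] {N : Subgroup G} (hN : N.Normal)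
    (h : IsPiGroup π N) : N ≤ piCore π G :=
  le_iSup (fun N : {N : Subgroup G // N.Normal ∧ IsPiGroup π N} => (N : Subgroup G)) ⟨N, hN, h⟩

lemma isPiGroup_bot {G : Type*} [Group G] : IsPiGroup π (⊥ : Subgroup G) := by
  intro p hp hpd
  rw [Subgroup.card_bot] at hpd
  exact absurd (Nat.dvd_one.mp hpd) hp.ne_one

lemma isPiGroup_sup {G : Type*} [Group G] [Finite G] {H K : Subgroup G} (hH : H.Normal)
    (hHπ : IsPiGroup π H) (hKπ : IsPiGroup π K) : IsPiGroup π ↥(K ⊔ H) := by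
  haveI := hH
  intro p hp hpd
  have h1 : Nat.card ↥(K ⊔ H) =
      Nat.card (↥(K ⊔ H) ⧸ (H.subgroupOf (K ⊔ H))) * Nat.card ↥(H.subgroupOf (K ⊔ H)) :=
    Subgroup.card_eq_card_quotient_mul_card_subgroup _
  have e1 : Nat.card (↥(K ⊔ H) ⧸ H.subgroupOf (K ⊔ H)) = Nat.card (↥K ⧸ H.subgroupOf K) :=
    Nat.card_congr (QuotientGroup.quotientInfEquivProdNormalQuotient K H).symm.toEquiv
  have e2 : Nat.card ↥(H.subgroupOf (K ⊔ H)) = Nat.card ↥H :=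
    Nat.card_congr (Subgroup.subgroupOfEquivOfLe le_sup_right).toEquiv
  have h2 : Nat.card (↥K ⧸ H.subgroupOf K) ∣ Nat.card ↥K :=
    Dvd.intro _ (Subgroup.card_eq_card_quotient_mul_card_subgroup (H.subgroupOf K)).symm
  have h3 : Nat.card ↥(K ⊔ H) ∣ Nat.card ↥K * Nat.card ↥H := by
    rw [h1, e1, e2]; exact mul_dvd_mul h2 dvd_rfl
  rcases hp.dvd_mul.mp (hpd.trans h3) with h | h
  · exact hKπ p hp h
  · exact hHπ p hp h

lemma piCore_isPiGroup (π : Set ℕ) (G : Type*) [Group G] [Finite G] :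
    IsPiGroup π (piCore π G) := by
  have key : ∀ s : Set (Subgroup G), s.Finite → (∀ N ∈ s, N.Normal ∧ IsPiGroup π ↥N) →
      (sSup s).Normal ∧ IsPiGroup π ↥(sSup s) := by
    intro s hfin
    refine Set.Finite.induction_on (motive := fun (s : Set (Subgroup G)) _ => (∀ N ∈ s, N.Normal ∧ IsPiGroup π ↥N) →
      (sSup s).Normal ∧ IsPiGroup π ↥(sSup s)) s hfin (fun _ => by
        rw [sSup_empty]; exact ⟨inferInstance, isPiGroup_bot⟩) ?_
    intro a s _ _ ih hmem
    obtain ⟨hsn, hsπ⟩ := ih (fun N hN => hmem N (Set.mem_insert_of_mem _ hN))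
    obtain ⟨han, haπ⟩ := hmem a (Set.mem_insert _ _)
    rw [sSup_insert]
    haveI := hsn
    constructor
    · rw [sup_eq_iSup]
      exact normal_iSup_of_normal _ (by rintro (_|_) <;> simpa)
    · exact isPiGroup_sup hsn hsπ haπ
  have : piCore π G = sSup {N : Subgroup G | N.Normal ∧ IsPiGroup π ↥N} := by
    rw [sSup_eq_iSup']; rfl
  rw [this]
  exact (key _ (Set.toFinite _) (fun N hN => hN)).2

lemma piCore_map_aut_le {G : Type*} [Group G] [Finite G] (e : G ≃* G) :
    (piCore π G).map e.toMonoidHom ≤ piCore π G := by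
  rw [piCore, Subgroup.map_iSup]
  exact iSup_le fun N => le_piCore (N.2.1.map _ e.surjective)
    (isPiGroup_of_mulEquiv (Subgroup.equivMapOfInjective _ _ e.injective).symm N.2.2)

lemma map_subtype_piCore_normal {G : Type*} [Group G] [Finite G] {K : Subgroup G}
    (hK : K.Normal) : ((piCore π K).map K.subtype).Normal := by
  haveI := hK
  constructor
  rintro n ⟨x, hx, rfl⟩ g
  refine ⟨MulAut.conjNormal g x, piCore_map_aut_le (MulAut.conjNormal g) ⟨x, hx, rfl⟩, ?_⟩
  simp

lemma map_subtype_piCore_le {G : Type*} [Group G] [Finite G] {K : Subgroup G}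
    (hK : K.Normal) : (piCore π K).map K.subtype ≤ piCore π G :=
  le_piCore (map_subtype_piCore_normal hK)
    (isPiGroup_of_card_dvd
      (dvd_of_eq (Nat.card_congr (Subgroup.equivMapOfInjective _ _ K.subtype_injective).symm.toEquiv))
      (piCore_isPiGroup π K))

end Helpers

section Transfer

lemma sigmaPrimary_of_card_dvd {ι : Type*} {σ : ι → Set ℕ} {H K : Type*} [Group H] [Group K]
    (h : Nat.card H ∣ Nat.card K) (hK : SigmaPrimary σ K) : SigmaPrimary σ H := by
  obtain ⟨i, hi⟩ := hK; exact ⟨i, isPiGroup_of_card_dvd h hi⟩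

lemma card_quotient_normalCore_dvd {X Q : Type*} [Group X] [Finite X] [Group Q] [Finite Q]
    (f : X →* Q) (T : Subgroup X) (h : f.ker ≤ T) :
    Nat.card (X ⧸ T.normalCore) ∣ Nat.card Q := by
  have hker : f.ker ≤ T.normalCore := Subgroup.normal_le_normalCore.mpr h
  have hsurj : Function.Surjective
      (QuotientGroup.map f.ker T.normalCore (MonoidHom.id X) hker) := by
    intro x
    obtain ⟨y, rfl⟩ := QuotientGroup.mk_surjective x
    exact ⟨QuotientGroup.mk y, rfl⟩
  calc Nat.card (X ⧸ T.normalCore) ∣ Nat.card (X ⧸ f.ker) :=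
        Subgroup.card_dvd_of_surjective _ hsurj
    _ = Nat.card f.range := Nat.card_congr (QuotientGroup.quotientKerEquivRange f).toEquiv
    _ ∣ Nat.card Q := Subgroup.card_subgroup_dvd_card _

lemma sigmaSubnormal_subgroupOf {ι : Type*} {σ : ι → Set ℕ} {G : Type*} [Group G] [Finite G]
    {A : Subgroup G} (hA : SigmaSubnormal σ A) (H : Subgroup G) :
    SigmaSubnormal σ (A.subgroupOf H) := by
  obtain ⟨n, c, h0, hn, hc⟩ := hA
  refine ⟨n, fun k => (c k).subgroupOf H, by simp only [h0],
    by simp only [hn, Subgroup.top_subgroupOf], ?_⟩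
  intro k hk
  obtain ⟨hle, hcase⟩ := hc k hk
  refine ⟨fun x hx => by
    rw [Subgroup.mem_subgroupOf] at hx ⊢; exact hle hx, ?_⟩
  rcases hcase with hnorm | hprim
  · left
    constructor
    intro u hu g
    rw [Subgroup.mem_subgroupOf, Subgroup.mem_subgroupOf] at hu ⊢
    have huY : ((u : ↥H) : G) ∈ c (k+1) := u.2
    have hgY : ((g : ↥H) : G) ∈ c (k+1) := g.2
    have := hnorm.conj_mem ⟨((u : ↥H) : G), huY⟩ hu ⟨((g : ↥H) : G), hgY⟩
    rw [Subgroup.mem_subgroupOf] at this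
    simpa using this
  · right
    set N := ((c k).subgroupOf (c (k+1))).normalCore
    let j : ↥((c (k+1)).subgroupOf H) →* ↥(c (k+1)) :=
      { toFun := fun y => ⟨((y : ↥H) : G), y.2⟩
        map_one' := rfl
        map_mul' := fun _ _ => rfl }
    refine sigmaPrimary_of_card_dvd
      (card_quotient_normalCore_dvd ((QuotientGroup.mk' N).comp j) _ ?_) hprim
    intro y hy
    rw [MonoidHom.mem_ker, MonoidHom.comp_apply, QuotientGroup.mk'_apply,
      QuotientGroup.eq_one_iff] at hy
    have hjy : j y ∈ (c k).subgroupOf (c (k+1)) := Subgroup.normalCore_le _ hy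
    rw [Subgroup.mem_subgroupOf] at hjy
    rw [Subgroup.mem_subgroupOf, Subgroup.mem_subgroupOf]
    exact hjy

lemma sigmaSubnormal_map {ι : Type*} {σ : ι → Set ℕ} {G G' : Type*} [Group G] [Finite G]
    [Group G'] [Finite G'] {A : Subgroup G} (hA : SigmaSubnormal σ A) (φ : G →* G')
    (hφ : Function.Surjective φ) : SigmaSubnormal σ (A.map φ) := by
  obtain ⟨n, c, h0, hn, hc⟩ := hA
  refine ⟨n, fun k => (c k).map φ, by simp only [h0], ?_, ?_⟩
  · show Subgroup.map φ (c n) = ⊤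
    rw [hn, ← MonoidHom.range_eq_map]
    exact MonoidHom.range_eq_top.mpr hφ
  intro k hk
  obtain ⟨hle, hcase⟩ := hc k hk
  refine ⟨Subgroup.map_mono hle, ?_⟩
  rcases hcase with hnorm | hprim
  · left
    constructor
    intro u hu g
    rw [Subgroup.mem_subgroupOf] at hu ⊢
    obtain ⟨x, hx, hxe⟩ := hu
    obtain ⟨y, hy, hye⟩ := g.2
    have hxy : y * x * y⁻¹ ∈ c k := by
      have := hnorm.conj_mem ⟨x, hle hx⟩ hx ⟨y, hy⟩
      rw [Subgroup.mem_subgroupOf] at this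
      simpa using this
    refine ⟨y * x * y⁻¹, hxy, ?_⟩
    push_cast
    rw [map_mul, map_mul, map_inv, hxe, hye]
  · right
    set N := ((c k).subgroupOf (c (k+1))).normalCore
    set C' := (((c k).map φ).subgroupOf ((c (k+1)).map φ)).normalCore
    haveI hTnormal : (Subgroup.map (φ.subgroupMap (c (k+1))) N).Normal :=
      Subgroup.Normal.map inferInstance _ (MonoidHom.subgroupMap_surjective φ _)
    have hTle : Subgroup.map (φ.subgroupMap (c (k+1))) N ≤ C' := by
      rw [Subgroup.normal_le_normalCore]
      rintro _ ⟨u, hu, rfl⟩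
      have hu' : u ∈ (c k).subgroupOf (c (k+1)) := Subgroup.normalCore_le _ hu
      rw [Subgroup.mem_subgroupOf] at hu'
      rw [Subgroup.mem_subgroupOf]
      exact ⟨(u : G), hu', rfl⟩
    have hker : N ≤ ((QuotientGroup.mk' C').comp (φ.subgroupMap (c (k+1)))).ker := by
      intro u hu
      rw [MonoidHom.mem_ker, MonoidHom.comp_apply, QuotientGroup.mk'_apply,
        QuotientGroup.eq_one_iff]
      exact hTle ⟨u, hu, rfl⟩
    have hsurj : Function.Surjective (QuotientGroup.lift N _ hker) := by
      intro t
      obtain ⟨z, rfl⟩ := QuotientGroup.mk_surjective t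
      obtain ⟨y, hy, hye⟩ := z.2
      refine ⟨QuotientGroup.mk ⟨y, hy⟩, ?_⟩
      have hz : φ.subgroupMap (c (k+1)) ⟨y, hy⟩ = z := Subtype.ext (by simpa using hye)
      rw [QuotientGroup.lift_mk', MonoidHom.comp_apply, hz, QuotientGroup.mk'_apply]
    exact sigmaPrimary_of_card_dvd (Subgroup.card_dvd_of_surjective _ hsurj) hprim
end Transfer

set_option maxHeartbeats 1000000
section MainAux

lemma chain_mono {G : Type*} [Group G] {c : ℕ → Subgroup G} {n : ℕ}
    (hc : ∀ k < n, c k ≤ c (k + 1)) :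
    ∀ a b, a ≤ b → b ≤ n → c a ≤ c b := by
  intro a b hab hbn
  induction b with
  | zero => cases Nat.le_zero.mp hab; exact le_rfl
  | succ b ih =>
    rcases Nat.eq_or_lt_of_le hab with h | h
    · rw [h]
    · exact (ih (Nat.lt_succ_iff.mp h) (Nat.le_of_succ_le hbn)).trans (hc b hbn)

lemma exists_common_prime {π : Set ℕ} {A Q : Type*} [Group A] [Finite A] [Group Q] [Finite Q]
    (f : A →* Q) (hA : IsPiGroup π A) {x : A} (hx : f x ≠ 1) :
    ∃ p : ℕ, p.Prime ∧ p ∈ π ∧ p ∣ Nat.card Q := by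
  have hne : f.range ≠ ⊥ := by
    intro h
    have hm : f x ∈ f.range := ⟨x, rfl⟩
    rw [h, Subgroup.mem_bot] at hm
    exact hx hm
  have h1 : 1 < Nat.card f.range := (Subgroup.one_lt_card_iff_ne_bot _).mpr hne
  obtain ⟨p, hp, hpd⟩ := Nat.exists_prime_and_dvd h1.ne'
  refine ⟨p, hp, hA p hp ?_, hpd.trans (Subgroup.card_subgroup_dvd_card _)⟩
  have h2 : Nat.card f.range = Nat.card (A ⧸ f.ker) :=
    Nat.card_congr (QuotientGroup.quotientKerEquivRange f).symm.toEquiv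
  rw [h2] at hpd
  exact hpd.trans ⟨Nat.card f.ker, Subgroup.card_eq_card_quotient_mul_card_subgroup f.ker⟩

lemma lemma2_7_aux {ι : Type} (σ : ι → Set ℕ) (hσ : IsPrimePartition σ) :
    ∀ (B : ℕ) (G : Type) [Group G] [Finite G], Nat.card G ≤ B →
      ∀ (A : Subgroup G), SigmaSubnormal σ A → ∀ i : ι, IsPiGroup (σ i) A →
        A ≤ piCore (σ i) G := by
  intro B
  induction B with
  | zero =>
    intro G _ _ hB
    exact absurd hB (by have : 0 < Nat.card G := Nat.card_pos; omega)
  | succ B ih =>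
    intro G _ _ hB A hA i hAi
    by_cases hW : piCore (σ i) G = ⊥
    case neg =>
      -- quotient by the nontrivial core and recurse
      set W := piCore (σ i) G with hWdef
      haveI hWn : W.Normal := piCore_normal (σ i) G
      have hWcard : 1 < Nat.card W := (Subgroup.one_lt_card_iff_ne_bot _).mpr hW
      have hcardQ : Nat.card (G ⧸ W) ≤ B := by
        have h1 : Nat.card G = Nat.card (G ⧸ W) * Nat.card W :=
          Subgroup.card_eq_card_quotient_mul_card_subgroup W
        have h2 : 0 < Nat.card (G ⧸ W) := Nat.card_pos
        nlinarith
      have hmappi : IsPiGroup (σ i) (A.map (QuotientGroup.mk' W)) :=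
        isPiGroup_of_card_dvd
          (Subgroup.card_dvd_of_surjective _ (MonoidHom.subgroupMap_surjective _ A)) hAi
      have hmap := ih (G ⧸ W) hcardQ (A.map (QuotientGroup.mk' W))
        (sigmaSubnormal_map hA _ (QuotientGroup.mk'_surjective W)) i hmappi
      set S := piCore (σ i) (G ⧸ W) with hSdef
      set R := S.comap (QuotientGroup.mk' W) with hRdef
      have hRnormal : R.Normal := (piCore_normal _ _).comap _
      have hRpi : IsPiGroup (σ i) R := by
        intro p hp hpd
        set χ := (QuotientGroup.mk' W).comp R.subtype with hχ
        have h1 : Nat.card R = Nat.card (↥R ⧸ χ.ker) * Nat.card χ.ker :=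
          Subgroup.card_eq_card_quotient_mul_card_subgroup χ.ker
        have h2 : Nat.card (↥R ⧸ χ.ker) ∣ Nat.card S := by
          have hle : χ.range ≤ S := by
            rintro _ ⟨r, rfl⟩
            exact r.2
          calc Nat.card (↥R ⧸ χ.ker) = Nat.card χ.range :=
                Nat.card_congr (QuotientGroup.quotientKerEquivRange χ).toEquiv
            _ ∣ Nat.card S := Subgroup.card_dvd_of_le hle
        have h3 : Nat.card χ.ker ∣ Nat.card W := by
          have hle : χ.ker ≤ W.subgroupOf R := by
            intro r hr
            rw [MonoidHom.mem_ker, MonoidHom.comp_apply, QuotientGroup.mk'_apply,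
              QuotientGroup.eq_one_iff] at hr
            exact hr
          calc Nat.card χ.ker ∣ Nat.card (W.subgroupOf R) := Subgroup.card_dvd_of_le hle
            _ = Nat.card W := Nat.card_congr (Subgroup.subgroupOfEquivOfLe
                (fun w hw => by
                  rw [hRdef, Subgroup.mem_comap]
                  have : (QuotientGroup.mk' W) w = 1 := by
                    rw [QuotientGroup.mk'_apply, QuotientGroup.eq_one_iff]; exact hw
                  rw [this]; exact S.one_mem)).toEquiv
        rw [h1] at hpd
        rcases hp.dvd_mul.mp hpd with h | h
        · exact piCore_isPiGroup (σ i) (G ⧸ W) p hp (h.trans h2)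
        · exact piCore_isPiGroup (σ i) G p hp (h.trans h3)
      have hRle : R ≤ piCore (σ i) G := le_piCore hRnormal hRpi
      intro a ha
      exact hRle (by rw [hRdef, Subgroup.mem_comap]; exact hmap ⟨a, ha, rfl⟩)
    case pos =>
      obtain ⟨n0, c0, h00, hn0, hc0⟩ := hA
      have inner : ∀ (n : ℕ) (c : ℕ → Subgroup G), c 0 = A → c n = ⊤ →
          (∀ k < n, c k ≤ c (k + 1) ∧
            (((c k).subgroupOf (c (k + 1))).Normal ∨
              SigmaPrimary σ ((c (k + 1)) ⧸ ((c k).subgroupOf (c (k + 1))).normalCore))) →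
          A ≤ piCore (σ i) G := by
        intro n
        induction n with
        | zero =>
          intro c h0 hn _
          rw [h0] at hn
          rw [hn] at hAi ⊢
          exact le_piCore inferInstance hAi
        | succ n ihn =>
          intro c h0 hn hc
          by_cases hMtop : c n = ⊤
          · exact ihn c h0 hMtop (fun k hk => hc k (Nat.lt_succ_of_lt hk))
          obtain ⟨hlast, hcase⟩ := hc n (Nat.lt_succ_self n)
          rw [hn] at hcase
          have hA' : SigmaSubnormal σ A := ⟨n + 1, c, h0, hn, hc⟩
          set M := c n with hMdef
          have hAM : A ≤ M := by
            have := chain_mono (fun k hk => (hc k hk).1) 0 n (Nat.zero_le n) (Nat.le_succ n)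
            rwa [h0] at this
          have hMlt : Nat.card M < Nat.card G := by
            refine lt_of_le_of_ne
              (Nat.le_of_dvd Nat.card_pos (Subgroup.card_subgroup_dvd_card M)) ?_
            intro h
            exact hMtop (Subgroup.eq_top_of_card_eq M h)
          have hMB : Nat.card M ≤ B := by omega
          have hDle := ih ↥M hMB (A.subgroupOf M) (sigmaSubnormal_subgroupOf hA' M) i
            (isPiGroup_of_mulEquiv (Subgroup.subgroupOfEquivOfLe hAM) hAi)
          set D := (piCore (σ i) ↥M).map M.subtype with hDdef
          have hAD : A ≤ D := fun a ha => ⟨⟨a, hAM ha⟩, hDle ha, rfl⟩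
          have hDpi : IsPiGroup (σ i) D := isPiGroup_of_mulEquiv
            (Subgroup.equivMapOfInjective _ _ M.subtype_injective).symm (piCore_isPiGroup _ _)
          have hDconj : ∀ m ∈ M, ∀ d ∈ D, m * d * m⁻¹ ∈ D := by
            rintro m hm d ⟨x, hx, rfl⟩
            exact ⟨⟨m, hm⟩ * x * ⟨m, hm⟩⁻¹, (piCore_normal _ _).conj_mem x hx ⟨m, hm⟩, rfl⟩
          rcases hcase with hnorm | hprim
          · have hMnormal : M.Normal := by
              constructor
              intro x hx g
              have h2 := hnorm.conj_mem ⟨x, Subgroup.mem_top x⟩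
                (by rwa [Subgroup.mem_subgroupOf]) ⟨g, Subgroup.mem_top g⟩
              rw [Subgroup.mem_subgroupOf] at h2
              simpa using h2
            exact hAD.trans (map_subtype_piCore_le hMnormal)
          · obtain ⟨j, hQ⟩ := hprim
            set N0 := (M.subgroupOf ⊤).normalCore with hN0def
            set K := N0.map (⊤ : Subgroup G).subtype with hKdef
            have hKM : K ≤ M := by
              rintro x ⟨u, hu, rfl⟩
              have h2 := Subgroup.normalCore_le _ hu
              rwa [Subgroup.mem_subgroupOf] at h2
            have hKnormal : K.Normal := by
              constructor
              rintro x ⟨u, hu, rfl⟩ g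
              refine ⟨⟨g, Subgroup.mem_top g⟩ * u * ⟨g, Subgroup.mem_top g⟩⁻¹,
                (Subgroup.normalCore_normal _).conj_mem u hu ⟨g, Subgroup.mem_top g⟩, ?_⟩
              simp
            have hKB : Nat.card K ≤ B := by
              have := Nat.le_of_dvd Nat.card_pos (Subgroup.card_dvd_of_le hKM)
              omega
            by_cases hAK : A ≤ K
            · have hle2 := ih ↥K hKB (A.subgroupOf K) (sigmaSubnormal_subgroupOf hA' K) i
                (isPiGroup_of_mulEquiv (Subgroup.subgroupOfEquivOfLe hAK) hAi)
              refine le_trans ?_ (map_subtype_piCore_le hKnormal)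
              exact fun a ha => ⟨⟨a, hAK ha⟩, hle2 ha, rfl⟩
            · -- first derive i = j
              obtain ⟨a0, ha0A, ha0K⟩ := SetLike.not_le_iff_exists.mp hAK
              have hij : i = j := by
                set fA := (QuotientGroup.mk' N0).comp (Subgroup.inclusion (le_top : A ≤ ⊤))
                  with hfA
                have hx : fA ⟨a0, ha0A⟩ ≠ 1 := by
                  intro h
                  rw [hfA, MonoidHom.comp_apply, QuotientGroup.mk'_apply,
                    QuotientGroup.eq_one_iff] at h
                  exact ha0K ⟨_, h, rfl⟩
                obtain ⟨p, hp, hpi, hpQ⟩ := exists_common_prime fA hAi hx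
                obtain ⟨w, _, hu⟩ := hσ.2 p hp
                exact (hu i hpi).trans (hu j (hQ p hp hpQ)).symm
              rw [← hij] at hQ
              have hEbot : (piCore (σ i) ↥K).map K.subtype = ⊥ :=
                le_bot_iff.mp (hW ▸ map_subtype_piCore_le hKnormal)
              have hDKle : D ⊓ K ≤ (piCore (σ i) ↥K).map K.subtype := by
                have hsub_norm : ((D ⊓ K).subgroupOf K).Normal := by
                  constructor
                  intro u hu g
                  rw [Subgroup.mem_subgroupOf] at hu ⊢
                  have h1 : ((g * u * g⁻¹ : ↥K) : G) = ↑g * ↑u * (↑g : G)⁻¹ := by push_cast; rfl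
                  rw [h1]
                  exact ⟨hDconj _ (hKM g.2) _ hu.1,
                    K.mul_mem (K.mul_mem g.2 hu.2) (K.inv_mem g.2)⟩
                have hsub_pi : IsPiGroup (σ i) ((D ⊓ K).subgroupOf K) :=
                  isPiGroup_of_card_dvd
                    (dvd_of_eq (Nat.card_congr
                      (Subgroup.subgroupOfEquivOfLe inf_le_right).toEquiv))
                    (isPiGroup_of_card_dvd (Subgroup.card_dvd_of_le inf_le_left) hDpi)
                have hle4 := le_piCore hsub_norm hsub_pi
                intro x hx
                exact ⟨⟨x, hx.2⟩, hle4 (by rw [Subgroup.mem_subgroupOf]; exact hx), rfl⟩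
              have hDKbot : D ⊓ K = ⊥ := le_bot_iff.mp (hEbot ▸ hDKle)
              set C := Subgroup.centralizer (K : Set G) with hCdef
              have hDC : D ≤ C := by
                intro d hd
                rw [hCdef, Subgroup.mem_centralizer_iff]
                intro k hk
                have h1 : k * d * k⁻¹ * d⁻¹ ∈ D :=
                  D.mul_mem (hDconj k (hKM hk) d hd) (D.inv_mem hd)
                have h2 : k * d * k⁻¹ * d⁻¹ ∈ K := by
                  have h3 : d * k⁻¹ * d⁻¹ ∈ K := hKnormal.conj_mem _ (K.inv_mem hk) d
                  have h4 := K.mul_mem hk h3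
                  have h5 : k * (d * k⁻¹ * d⁻¹) = k * d * k⁻¹ * d⁻¹ := by group
                  rwa [h5] at h4
                have h5 : k * d * k⁻¹ * d⁻¹ = 1 := by
                  have h6 : k * d * k⁻¹ * d⁻¹ ∈ D ⊓ K := ⟨h1, h2⟩
                  rwa [hDKbot, Subgroup.mem_bot] at h6
                have h6 : k * d * k⁻¹ = d := by
                  have := mul_eq_one_iff_eq_inv.mp h5
                  simpa using this
                calc k * d = k * d * k⁻¹ * k := by group
                  _ = d * k := by rw [h6]
              by_cases hC : C = ⊤
              · -- K is central; Schur-Zassenhaus endgame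
                haveI := hKnormal
                have hKcentral : ∀ k ∈ K, ∀ g : G, g * k = k * g := by
                  intro k hk g
                  have hg : g ∈ C := by rw [hC]; exact Subgroup.mem_top g
                  rw [hCdef, Subgroup.mem_centralizer_iff] at hg
                  exact (hg k hk).symm
                have hKfree : ∀ p : ℕ, p.Prime → p ∣ Nat.card K → p ∉ σ i := by
                  intro p hp hpd hpi
                  haveI : Fact p.Prime := ⟨hp⟩
                  obtain ⟨x, hx⟩ := exists_prime_orderOf_dvd_card' (G := ↥K) p hpd
                  set P := Subgroup.zpowers ((x : G)) with hPdef
                  have hPnormal : P.Normal := by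
                    constructor
                    intro q hq g
                    rw [hPdef, Subgroup.mem_zpowers_iff] at hq
                    obtain ⟨m, rfl⟩ := hq
                    have hcomm : Commute g ((x : G)) := hKcentral _ x.2 g
                    have h1 : g * (x : G) ^ m * g⁻¹ = (x : G) ^ m := by
                      rw [(hcomm.zpow_right m).eq, mul_inv_cancel_right]
                    rw [hPdef, Subgroup.mem_zpowers_iff]
                    exact ⟨m, h1.symm⟩
                  have hPcard : Nat.card P = p := by
                    rw [hPdef, Nat.card_zpowers, Subgroup.orderOf_coe, hx]
                  have hPle : P ≤ piCore (σ i) G := le_piCore hPnormal (by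
                    intro q hq hqd
                    rw [hPcard] at hqd
                    rwa [(Nat.prime_dvd_prime_iff_eq hq hp).mp hqd])
                  rw [hW, le_bot_iff] at hPle
                  rw [hPle, Subgroup.card_bot] at hPcard
                  exact hp.ne_one hPcard.symm
                have hKQ : K.index = Nat.card (↥(⊤ : Subgroup G) ⧸ N0) := by
                  have h1 : Nat.card ↥(⊤ : Subgroup G) =
                      Nat.card (↥(⊤ : Subgroup G) ⧸ N0) * Nat.card N0 :=
                    Subgroup.card_eq_card_quotient_mul_card_subgroup N0
                  have h2 : Nat.card ↥(⊤ : Subgroup G) = Nat.card G :=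
                    Nat.card_congr Subgroup.topEquiv.toEquiv
                  have h3 : Nat.card K = Nat.card N0 :=
                    Nat.card_congr
                      (Subgroup.equivMapOfInjective _ _
                        (⊤ : Subgroup G).subtype_injective).symm.toEquiv
                  have h4 : Nat.card K * K.index = Nat.card G := Subgroup.card_mul_index K
                  have h5 : 0 < Nat.card N0 := Nat.card_pos
                  have h6 : K.index * Nat.card N0 =
                      Nat.card (↥(⊤ : Subgroup G) ⧸ N0) * Nat.card N0 := by
                    calc K.index * Nat.card N0 = K.index * Nat.card K := by rw [h3]
                      _ = Nat.card G := by rw [mul_comm]; exact h4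
                      _ = Nat.card ↥(⊤ : Subgroup G) := h2.symm
                      _ = _ := h1
                  exact Nat.eq_of_mul_eq_mul_right h5 h6
                have hcop : Nat.Coprime (Nat.card K) K.index := by
                  by_contra h
                  obtain ⟨p, hp, hpd⟩ := Nat.exists_prime_and_dvd h
                  exact hKfree p hp (hpd.trans (Nat.gcd_dvd_left _ _))
                    (hQ p hp (by rw [← hKQ]; exact hpd.trans (Nat.gcd_dvd_right _ _)))
                obtain ⟨H, hH⟩ := Subgroup.exists_right_complement'_of_coprime hcop
                have hdecomp : ∀ g : G, ∃ k ∈ K, ∃ h ∈ H, k * h = g := by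
                  intro g
                  obtain ⟨⟨k, x⟩, hkx, -⟩ := hH.existsUnique g
                  exact ⟨k, k.2, x, x.2, hkx⟩
                have hHnormal : H.Normal := by
                  constructor
                  intro h hh g
                  obtain ⟨k, hk, x, hx', rfl⟩ := hdecomp g
                  have he : k * x * h * (k * x)⁻¹ = x * h * x⁻¹ := by
                    have h1 := hKcentral k hk (x * h * x⁻¹)
                    rw [mul_inv_rev,
                      show k * x * h * (x⁻¹ * k⁻¹) = k * (x * h * x⁻¹) * k⁻¹ by group,
                      ← h1, mul_inv_cancel_right]
                  rw [he]
                  exact H.mul_mem (H.mul_mem hx' hh) (H.inv_mem hx')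
                haveI := hHnormal
                have hHcard : Nat.card H = K.index := by
                  have h1 : Nat.card K * Nat.card H = Nat.card G := hH.card_mul
                  have h2 := Subgroup.card_mul_index K
                  exact Nat.eq_of_mul_eq_mul_left Nat.card_pos (h1.trans h2.symm)
                have hHpi : IsPiGroup (σ i) H := fun p hp hpd =>
                  hQ p hp (by rw [← hKQ]; rwa [hHcard] at hpd)
                have hGH : Nat.card (G ⧸ H) = Nat.card K := by
                  have h1 : Nat.card G = Nat.card (G ⧸ H) * Nat.card H :=
                    Subgroup.card_eq_card_quotient_mul_card_subgroup H
                  have h2 : Nat.card K * Nat.card H = Nat.card G := hH.card_mul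
                  exact Nat.eq_of_mul_eq_mul_right Nat.card_pos (h1.symm.trans h2.symm)
                have hAH : A ≤ H := by
                  by_contra hAH
                  obtain ⟨a, haA, haH⟩ := SetLike.not_le_iff_exists.mp hAH
                  set fA := (QuotientGroup.mk' H).comp A.subtype with hfA
                  have hx : fA ⟨a, haA⟩ ≠ 1 := by
                    intro h
                    rw [hfA, MonoidHom.comp_apply, QuotientGroup.mk'_apply,
                      QuotientGroup.eq_one_iff] at h
                    exact haH h
                  obtain ⟨p, hp, hpi2, hpQ2⟩ := exists_common_prime fA hAi hx
                  rw [hGH] at hpQ2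
                  exact hKfree p hp hpQ2 hpi2
                exact hAH.trans (le_piCore hHnormal hHpi)
              · -- the centralizer is proper: recurse into it
                have hCnormal : C.Normal := by
                  constructor
                  intro c' hc' g
                  rw [hCdef, Subgroup.mem_centralizer_iff] at hc' ⊢
                  intro k hk
                  have h1 : g⁻¹ * k * g ∈ K := by
                    have := hKnormal.conj_mem k hk g⁻¹
                    simpa using this
                  have h2 := hc' _ h1
                  have h3 := congrArg (fun t => g * t * g⁻¹) h2
                  simp only [mul_assoc] at h3 ⊢
                  simpa [mul_assoc] using h3
                have hClt : Nat.card C < Nat.card G := by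
                  refine lt_of_le_of_ne
                    (Nat.le_of_dvd Nat.card_pos (Subgroup.card_subgroup_dvd_card C)) ?_
                  intro h
                  exact hC (Subgroup.eq_top_of_card_eq C h)
                have hCB : Nat.card C ≤ B := by omega
                have hAC : A ≤ C := hAD.trans hDC
                have hle3 := ih ↥C hCB (A.subgroupOf C) (sigmaSubnormal_subgroupOf hA' C) i
                  (isPiGroup_of_mulEquiv (Subgroup.subgroupOfEquivOfLe hAC) hAi)
                refine le_trans ?_ (map_subtype_piCore_le hCnormal)
                exact fun a ha => ⟨⟨a, hAC ha⟩, hle3 ha, rfl⟩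
      exact inner n0 c0 h00 hn0 hc0

end MainAux

/-- Lemma 2.7: let `σ` be a partition of the primes and `A` a σ-subnormal subgroup of
`G`. If `A` is a `σ i`-group for some `i`, then `A ≤ O_{σ i}(G)`, the largest normal
`σ i`-subgroup of `G`. -/
theorem lemma2_7 {ι : Type} (σ : ι → Set ℕ) (hσ : IsPrimePartition σ)
    (G : Type) [Group G] [Finite G] (A : Subgroup G) (hA : SigmaSubnormal σ A)
    (i : ι) (hAi : IsPiGroup (σ i) A) :
    A ≤ piCore (σ i) G := by
  exact lemma2_7_aux σ hσ (Nat.card G) G le_rfl A hA i hAi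
end
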